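/- arXiv:2404.05727 — 4 statements merged into one kernel-verified Lean document; each statement's English description precedes it below -/
import Mathlib

section
/- For every subset I ⊆ ℤ/d there exist nonnegative rational numbers a(I,J), indexed by the subsets J ⊆ ℤ/d with |J| = |I|, such that L_I = Σ_{J ⊆ ℤ/d, |J| = |I|} a(I,J) · N_J holds in R. (This is the algebraic form of the strata-effectivity of all Hodge–Chern monomials on G-Zip^μ for G of type A_1^d.) -/
open MvPolynomial Finset

noncomputable section

/-- The ideal of `ℚ[x_i : i ∈ ℤ/d]` generated by the squares of the variables. -/
def sqIdeal (d : ℕ) : Ideal (MvPolynomial (ZMod d) ℚ) :=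
  Ideal.span (Set.range fun i : ZMod d => (X i) ^ 2)

/-- The ring `R = ℚ[x_i : i ∈ ℤ/d]/(x_i²)`. -/
abbrev ZipRing (d : ℕ) := MvPolynomial (ZMod d) ℚ ⧸ sqIdeal d

/-- The class `l_i` of the variable `x_i` in `R`. -/
def lcl (d : ℕ) (i : ZMod d) : ZipRing d := Ideal.Quotient.mk (sqIdeal d) (X i)

/-- The Hodge–Chern monomial `L_I = ∏_{i ∈ I} l_i`. -/
def Lmon (d : ℕ) (I : Finset (ZMod d)) : ZipRing d := ∏ i ∈ I, lcl d i

/-- `N_i = p·l_i − l_{i+1}`. -/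
def Nelt (d p : ℕ) (i : ZMod d) : ZipRing d := (p : ZipRing d) * lcl d i - lcl d (i + 1)

/-- `P_i = p·l_i + l_{i+1}`. -/
def Pelt (d p : ℕ) (i : ZMod d) : ZipRing d := (p : ZipRing d) * lcl d i + lcl d (i + 1)

/-- The strata class `N_I = ∏_{i ∈ I} N_i`. -/
def Nmon (d p : ℕ) (I : Finset (ZMod d)) : ZipRing d := ∏ i ∈ I, Nelt d p i

/-- `P_I = ∏_{i ∈ I} P_i`. -/
def Pmon (d p : ℕ) (I : Finset (ZMod d)) : ZipRing d := ∏ i ∈ I, Pelt d p i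

set_option synthInstance.maxHeartbeats 1000000 in
instance zipAlgebra (d : ℕ) : Algebra ℚ (ZipRing d) := inferInstance

set_option synthInstance.maxHeartbeats 1000000 in
instance zipSMulComm (d : ℕ) : SMulCommClass ℚ (ZipRing d) (ZipRing d) := inferInstance

set_option synthInstance.maxHeartbeats 1000000 in
instance zipTower (d : ℕ) : IsScalarTower ℚ (ZipRing d) (ZipRing d) := inferInstance

/-- `x` is a nonneg combination of `N_J`, `|J| = m`, `J ⊆ S`. -/
def Eff (d p : ℕ) [NeZero d] (S : Finset (ZMod d)) (m : ℕ) (x : ZipRing d) : Prop :=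
  ∃ a : Finset (ZMod d) → ℚ, (∀ J, 0 ≤ a J) ∧ (∀ J, a J ≠ 0 → J ⊆ S) ∧
    x = ∑ J ∈ Finset.univ.powerset.filter (fun J => J.card = m), a J • Nmon d p J

lemma eff_zero (d p : ℕ) [NeZero d] (S : Finset (ZMod d)) (m : ℕ) : Eff d p S m 0 :=
  ⟨0, fun _ => le_rfl, fun J h => absurd rfl h, by simp⟩

lemma eff_add {d p : ℕ} [NeZero d] {S : Finset (ZMod d)} {m : ℕ} {x y : ZipRing d}
    (hx : Eff d p S m x) (hy : Eff d p S m y) : Eff d p S m (x + y) := by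
  obtain ⟨a, ha0, haS, rfl⟩ := hx
  obtain ⟨b, hb0, hbS, rfl⟩ := hy
  refine ⟨fun J => a J + b J, fun J => add_nonneg (ha0 J) (hb0 J), ?_, ?_⟩
  · intro J h
    by_cases haJ : a J = 0
    · exact hbS J (by simpa [haJ] using h)
    · exact haS J haJ
  · rw [← Finset.sum_add_distrib]
    exact Finset.sum_congr rfl fun J _ => (add_smul _ _ _).symm

lemma eff_sum {d p : ℕ} [NeZero d] {S : Finset (ZMod d)} {m : ℕ} {ι : Type*} (s : Finset ι)
    (f : ι → ZipRing d) (h : ∀ i ∈ s, Eff d p S m (f i)) : Eff d p S m (∑ i ∈ s, f i) :=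
  Finset.sum_induction f _ (fun _ _ => eff_add) (eff_zero d p S m) h

lemma eff_gen {d p : ℕ} [NeZero d] {S : Finset (ZMod d)} {m : ℕ} (q : ℚ) (hq : 0 ≤ q)
    (J : Finset (ZMod d)) (hJ : J ⊆ S) (hc : J.card = m) : Eff d p S m (q • Nmon d p J) := by
  refine ⟨fun U => if U = J then q else 0,
    fun U => by by_cases h : U = J <;> simp [h, hq], fun U h => ?_, ?_⟩
  · by_cases hUJ : U = J
    · exact hUJ ▸ hJ
    · simp [hUJ] at h
  · symm
    have h1 : ∀ U ∈ Finset.univ.powerset.filter (fun J => J.card = m),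
        (fun U => if U = J then q else 0) U • Nmon d p U
          = (if U = J then q • Nmon d p J else 0) := by
      intro U _
      by_cases h : U = J
      · subst h; simp
      · simp [h]
    rw [Finset.sum_congr rfl h1, Finset.sum_ite_eq']
    simp [hc]

lemma eff_smul {d p : ℕ} [NeZero d] {S : Finset (ZMod d)} {m : ℕ} {x : ZipRing d} (q : ℚ) (hq : 0 ≤ q)
    (hx : Eff d p S m x) : Eff d p S m (q • x) := by
  obtain ⟨a, ha0, haS, rfl⟩ := hx
  refine ⟨fun J => q * a J, fun J => mul_nonneg hq (ha0 J), ?_, ?_⟩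
  · intro J h
    exact haS J fun h0 => h (by simp [h0])
  · rw [Finset.smul_sum]
    exact Finset.sum_congr rfl fun J _ => (mul_smul q (a J) (Nmon d p J)).symm

lemma eff_mul {d p : ℕ} [NeZero d] {S T : Finset (ZMod d)} {m n : ℕ} {x y : ZipRing d}
    (hx : Eff d p S m x) (hy : Eff d p T n y) (hST : Disjoint S T) :
    Eff d p (S ∪ T) (m + n) (x * y) := by
  obtain ⟨a, ha0, haS, rfl⟩ := hx
  obtain ⟨b, hb0, hbT, rfl⟩ := hy
  rw [Finset.sum_mul_sum]
  apply eff_sum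
  intro J hJ
  apply eff_sum
  intro K hK
  by_cases h0 : a J * b K = 0
  · rw [smul_mul_smul_comm, h0, zero_smul]
    exact eff_zero d p _ _
  · have haJ : a J ≠ 0 := fun h => h0 (by simp [h])
    have hbK : b K ≠ 0 := fun h => h0 (by simp [h])
    have hJS := haS J haJ
    have hKT := hbT K hbK
    have hdisj : Disjoint J K := hST.mono hJS hKT
    have hNJK : Nmon d p J * Nmon d p K = Nmon d p (J ∪ K) :=
      (Finset.prod_union hdisj).symm
    rw [smul_mul_smul_comm, hNJK]
    refine eff_gen _ (mul_nonneg (ha0 J) (hb0 K)) _ (Finset.union_subset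
      (hJS.trans Finset.subset_union_left) (hKT.trans Finset.subset_union_right)) ?_
    rw [Finset.card_union_of_disjoint hdisj,
      (Finset.mem_filter.mp hJ).2, (Finset.mem_filter.mp hK).2]

lemma lcl_mul_self (d : ℕ) (i : ZMod d) : lcl d i * lcl d i = 0 := by
  rw [lcl, ← map_mul, ← sq]
  exact Ideal.Quotient.eq_zero_iff_mem.mpr (Ideal.subset_span ⟨i, rfl⟩)

/-- the generic expansion of the cyclic product -/
lemma prod_expand (d p : ℕ) (u : ℕ → ZMod d) (g : ℕ → ℕ) (t : ℕ) :
    ∏ s ∈ Finset.range t, ((p : ZipRing d) ^ (g s) * lcl d (u s) - lcl d (u (s + 1)))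
      = ∑ j ∈ Finset.range (t + 1), (-1 : ZipRing d) ^ (t - j)
          * (p : ZipRing d) ^ (∑ s ∈ Finset.range j, g s)
          * ((∏ s ∈ Finset.range j, lcl d (u s)) * ∏ s ∈ Finset.Ico j t, lcl d (u (s + 1))) := by
  induction t with
  | zero => simp
  | succ t ih =>
    rw [Finset.prod_range_succ, ih, Finset.sum_mul]
    have key : ∀ j ∈ Finset.range (t + 1),
        ((-1 : ZipRing d) ^ (t - j) * (p : ZipRing d) ^ (∑ s ∈ Finset.range j, g s)
          * ((∏ s ∈ Finset.range j, lcl d (u s)) * ∏ s ∈ Finset.Ico j t, lcl d (u (s + 1))))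
          * ((p : ZipRing d) ^ (g t) * lcl d (u t) - lcl d (u (t + 1)))
        = ((-1 : ZipRing d) ^ (t + 1 - j) * (p : ZipRing d) ^ (∑ s ∈ Finset.range j, g s)
          * ((∏ s ∈ Finset.range j, lcl d (u s)) * ∏ s ∈ Finset.Ico j (t + 1), lcl d (u (s + 1))))
          + (if j = t then
              (-1 : ZipRing d) ^ (t + 1 - (t + 1))
                * (p : ZipRing d) ^ (∑ s ∈ Finset.range (t + 1), g s)
                * ((∏ s ∈ Finset.range (t + 1), lcl d (u s))
                    * ∏ s ∈ Finset.Ico (t + 1) (t + 1), lcl d (u (s + 1)))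
            else 0) := by
      intro j hj
      rw [Finset.mem_range] at hj
      have hjt : j ≤ t := by omega
      rcases Nat.eq_or_lt_of_le hjt with rfl | hlt
      · rw [if_pos rfl]
        rw [Finset.prod_Ico_succ_top (le_refl j),
          Finset.sum_range_succ, Finset.prod_range_succ, pow_add,
          show j + 1 - j = 1 by omega, Nat.sub_self, Nat.sub_self]
        simp only [Finset.Ico_self, Finset.prod_empty]
        ring
      · rw [if_neg (by omega)]
        obtain ⟨t', rfl⟩ : ∃ t', t = t' + 1 := ⟨t - 1, by omega⟩
        have hjt' : j ≤ t' := by omega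
        rw [Finset.prod_Ico_succ_top hjt', Finset.prod_Ico_succ_top (by omega : j ≤ t' + 1),
          Finset.prod_Ico_succ_top hjt',
          show t' + 1 + 1 - j = (t' + 1 - j) + 1 by omega, pow_succ]
        linear_combination ((-1 : ZipRing d) ^ (t' + 1 - j)
          * (p : ZipRing d) ^ (∑ s ∈ Finset.range j, g s) * (p : ZipRing d) ^ (g (t' + 1))
          * (∏ s ∈ Finset.range j, lcl d (u s)) * (∏ s ∈ Finset.Ico j t', lcl d (u (s + 1))))
          * lcl_mul_self d (u (t' + 1))
    rw [Finset.sum_congr rfl key, Finset.sum_add_distrib, Finset.sum_ite_eq',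
      if_pos (Finset.self_mem_range_succ t), Finset.sum_range_succ _ (t + 1)]

/-- evaluating the expansion when `u m = u 0`: only the two extreme terms survive -/
lemma sum_eval (d p : ℕ) (u : ℕ → ZMod d) (g : ℕ → ℕ) (m : ℕ) (hm : 1 ≤ m)
    (hu : u m = u 0) :
    ∑ j ∈ Finset.range (m + 1), (-1 : ZipRing d) ^ (m - j)
        * (p : ZipRing d) ^ (∑ s ∈ Finset.range j, g s)
        * ((∏ s ∈ Finset.range j, lcl d (u s)) * ∏ s ∈ Finset.Ico j m, lcl d (u (s + 1)))
      = ((p : ZipRing d) ^ (∑ s ∈ Finset.range m, g s) + (-1 : ZipRing d) ^ m)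
          * ∏ s ∈ Finset.range m, lcl d (u s) := by
  obtain ⟨k, rfl⟩ : ∃ k, m = k + 1 := ⟨m - 1, by omega⟩
  rw [Finset.sum_range_succ]
  have hmid : ∑ j ∈ Finset.range (k + 1), (-1 : ZipRing d) ^ (k + 1 - j)
      * (p : ZipRing d) ^ (∑ s ∈ Finset.range j, g s)
      * ((∏ s ∈ Finset.range j, lcl d (u s)) * ∏ s ∈ Finset.Ico j (k + 1), lcl d (u (s + 1)))
      = (-1 : ZipRing d) ^ (k + 1 - 0)
          * (p : ZipRing d) ^ (∑ s ∈ Finset.range 0, g s)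
          * ((∏ s ∈ Finset.range 0, lcl d (u s))
              * ∏ s ∈ Finset.Ico 0 (k + 1), lcl d (u (s + 1))) := by
    apply Finset.sum_eq_single_of_mem 0 (Finset.mem_range.mpr (by omega))
    intro j hj hj0
    rw [Finset.mem_range] at hj
    obtain ⟨j', rfl⟩ : ∃ j', j = j' + 1 := ⟨j - 1, by omega⟩
    rw [Finset.prod_range_succ', Finset.prod_Ico_succ_top (by omega : j' + 1 ≤ k), hu]
    linear_combination ((-1 : ZipRing d) ^ (k + 1 - (j' + 1))
      * (p : ZipRing d) ^ (∑ s ∈ Finset.range (j' + 1), g s)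
      * (∏ s ∈ Finset.range j', lcl d (u (s + 1)))
      * (∏ s ∈ Finset.Ico (j' + 1) k, lcl d (u (s + 1)))) * lcl_mul_self d (u 0)
  rw [hmid]
  simp only [Finset.range_zero, Finset.sum_empty, Finset.prod_empty, pow_zero,
    Nat.sub_zero, one_mul, mul_one]
  have hcyc : ∏ s ∈ Finset.Ico 0 (k + 1), lcl d (u (s + 1))
      = ∏ s ∈ Finset.range (k + 1), lcl d (u s) := by
    rw [show Finset.Ico 0 (k + 1) = Finset.range (k + 1) by rw [Finset.range_eq_Ico],
      Finset.prod_range_succ, hu, Finset.prod_range_succ']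
  rw [hcyc]
  simp only [Nat.sub_self, pow_zero, Finset.Ico_self, Finset.prod_empty]
  ring

/-- telescoping -/
lemma telescope (d p : ℕ) : ∀ b : ℕ, ∀ a : ℕ, a ≤ b →
    (p : ZipRing d) ^ (b - a) * lcl d ((a : ℕ) : ZMod d) - lcl d ((b : ℕ) : ZMod d)
      = ∑ k ∈ Finset.Ico a b, (p : ZipRing d) ^ (b - 1 - k) * Nelt d p ((k : ℕ) : ZMod d) := by
  intro b
  induction b with
  | zero => intro a ha; interval_cases a; simp
  | succ b ih =>
    intro a ha
    by_cases h : a = b + 1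
    · subst h; simp
    · have hab : a ≤ b := by omega
      rw [Finset.sum_Ico_succ_top hab]
      have : ∀ k ∈ Finset.Ico a b, (p : ZipRing d) ^ (b + 1 - 1 - k) * Nelt d p ((k : ℕ) : ZMod d)
          = (p : ZipRing d) * ((p : ZipRing d) ^ (b - 1 - k) * Nelt d p ((k : ℕ) : ZMod d)) := by
        intro k hk
        rw [Finset.mem_Ico] at hk
        rw [show b + 1 - 1 - k = (b - 1 - k) + 1 by omega, pow_succ]
        ring
      rw [Finset.sum_congr rfl this, ← Finset.mul_sum, ← ih a hab]
      rw [show b + 1 - a = (b - a) + 1 by omega, pow_succ]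
      rw [show b + 1 - 1 - b = 0 by omega]
      simp only [Nelt, Nat.cast_add, Nat.cast_one, pow_zero]
      ring

lemma natCast_inj_window (d : ℕ) [NeZero d] {c k1 k2 : ℕ} (h1 : c ≤ k1) (h1' : k1 < c + d)
    (h2 : c ≤ k2) (h2' : k2 < c + d) (h : ((k1 : ℕ) : ZMod d) = ((k2 : ℕ) : ZMod d)) :
    k1 = k2 := by
  have hmod := (ZMod.natCast_eq_natCast_iff k1 k2 d).mp h
  rcases le_total k1 k2 with hle | hle
  · have hdvd := (Nat.modEq_iff_dvd' hle).mp hmod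
    rcases Nat.eq_zero_or_pos (k2 - k1) with h0 | hpos
    · omega
    · have := Nat.le_of_dvd hpos hdvd; omega
  · have hdvd := (Nat.modEq_iff_dvd' hle).mp hmod.symm
    rcases Nat.eq_zero_or_pos (k1 - k2) with h0 | hpos
    · omega
    · have := Nat.le_of_dvd hpos hdvd; omega

lemma rat_smul_def (d : ℕ) (q : ℚ) (x : ZipRing d) :
    q • x = Ideal.Quotient.mk (sqIdeal d) (MvPolynomial.C q) * x := by
  obtain ⟨y, rfl⟩ := Ideal.Quotient.mk_surjective x
  rw [← map_mul, ← MvPolynomial.smul_eq_C_mul]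
  rfl

lemma rat_pow_smul (d p e : ℕ) (x : ZipRing d) :
    ((p : ℚ) ^ e) • x = (p : ZipRing d) ^ e * x := by
  rw [rat_smul_def]; norm_cast

lemma eff_factor (d p : ℕ) [NeZero d] (a b : ℕ) (hab : a ≤ b) :
    Eff d p ((Finset.Ico a b).image (Nat.cast : ℕ → ZMod d)) 1
      ((p : ZipRing d) ^ (b - a) * lcl d ((a : ℕ) : ZMod d) - lcl d ((b : ℕ) : ZMod d)) := by
  rw [telescope d p b a hab]
  apply eff_sum
  intro k hk
  have h1 : (p : ZipRing d) ^ (b - 1 - k) * Nelt d p ((k : ℕ) : ZMod d)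
      = ((p : ℚ) ^ (b - 1 - k)) • Nmon d p {((k : ℕ) : ZMod d)} := by
    rw [Nmon, Finset.prod_singleton, rat_pow_smul]
  rw [h1]
  exact eff_gen _ (by positivity) _
    (Finset.singleton_subset_iff.mpr (Finset.mem_image_of_mem _ hk)) (Finset.card_singleton _)

lemma main_w (d p : ℕ) [NeZero d] (m : ℕ) (hm : 1 ≤ m) (w : ℕ → ℕ)
    (hwlt : ∀ s, s < m → w s < w (s + 1)) (hwm : w m = w 0 + d) :
    Eff d p ((Finset.Ico (w 0) (w m)).image (Nat.cast : ℕ → ZMod d)) m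
      (((p : ZipRing d) ^ d + (-1 : ZipRing d) ^ m)
        * ∏ s ∈ Finset.range m, lcl d ((w s : ℕ) : ZMod d)) := by
  have hmono : ∀ j, j ≤ m → ∀ i, i ≤ j → w i ≤ w j := by
    intro j
    induction j with
    | zero => intro _ i hi; obtain rfl := Nat.le_zero.mp hi; exact le_rfl
    | succ j ih =>
      intro hj i hi
      rcases Nat.eq_or_lt_of_le hi with rfl | hlt
      · exact le_rfl
      · exact (ih (by omega) i (by omega)).trans (le_of_lt (hwlt j (by omega)))
  -- sum of gaps is d
  have hg : ∀ t, t ≤ m → ∑ s ∈ Finset.range t, (w (s + 1) - w s) = w t - w 0 := by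
    intro t
    induction t with
    | zero => simp
    | succ t ih =>
      intro ht
      rw [Finset.sum_range_succ, ih (by omega)]
      have h1 : w 0 ≤ w t := hmono t (by omega) 0 (by omega)
      have h2 : w t ≤ w (t + 1) := le_of_lt (hwlt t (by omega))
      omega
  -- effectivity of the partial products
  have key : ∀ t, t ≤ m → Eff d p ((Finset.Ico (w 0) (w t)).image (Nat.cast : ℕ → ZMod d)) t
      (∏ s ∈ Finset.range t,
        ((p : ZipRing d) ^ (w (s + 1) - w s) * lcl d ((w s : ℕ) : ZMod d)
          - lcl d ((w (s + 1) : ℕ) : ZMod d))) := by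
    intro t
    induction t with
    | zero =>
      intro _
      rw [Finset.range_zero, Finset.prod_empty]
      have := eff_gen (d := d) (p := p)
        (S := (Finset.Ico (w 0) (w 0)).image (Nat.cast : ℕ → ZMod d)) 1 zero_le_one ∅
        (Finset.empty_subset _) Finset.card_empty
      simpa [Nmon] using this
    | succ t ih =>
      intro ht
      rw [Finset.prod_range_succ]
      have hfac := eff_factor d p (w t) (w (t + 1)) (le_of_lt (hwlt t (by omega)))
      have hdisj : Disjoint ((Finset.Ico (w 0) (w t)).image (Nat.cast : ℕ → ZMod d))
          ((Finset.Ico (w t) (w (t + 1))).image (Nat.cast : ℕ → ZMod d)) := by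
        rw [Finset.disjoint_left]
        rintro x hx1 hx2
        obtain ⟨k1, hk1, rfl⟩ := Finset.mem_image.mp hx1
        obtain ⟨k2, hk2, hk12⟩ := Finset.mem_image.mp hx2
        rw [Finset.mem_Ico] at hk1 hk2
        have hb1 : w t ≤ w 0 + d := by
          have := hmono m le_rfl t (by omega); omega
        have hb2 : w (t + 1) ≤ w 0 + d := by
          have := hmono m le_rfl (t + 1) (by omega); omega
        have : k2 = k1 := natCast_inj_window d (c := w 0) (by omega) (by omega) (by omega)
          (by omega) hk12
        omega
      have hcup : (Finset.Ico (w 0) (w t)).image (Nat.cast : ℕ → ZMod d)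
          ∪ (Finset.Ico (w t) (w (t + 1))).image (Nat.cast : ℕ → ZMod d)
          = (Finset.Ico (w 0) (w (t + 1))).image (Nat.cast : ℕ → ZMod d) := by
        rw [← Finset.image_union,
          Finset.Ico_union_Ico_eq_Ico (hmono t (by omega) 0 (by omega))
            (le_of_lt (hwlt t (by omega)))]
      have := eff_mul (ih (by omega)) hfac hdisj
      rwa [hcup] at this
  have hfin := key m le_rfl
  have hexp := prod_expand d p (fun s => ((w s : ℕ) : ZMod d)) (fun s => w (s + 1) - w s) m
  have heval := sum_eval d p (fun s => ((w s : ℕ) : ZMod d)) (fun s => w (s + 1) - w s) m hm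
    (by show ((w m : ℕ) : ZMod d) = ((w 0 : ℕ) : ZMod d); rw [hwm]; push_cast; simp)
  have hd : w m - w 0 = d := by omega
  rw [hexp, heval, hg m le_rfl, hd] at hfin
  exact hfin

/-- Every Hodge–Chern monomial `L_I` is a non-negative rational linear combination of the
strata classes `N_J` with `|J| = |I|`. -/
theorem stmt0 (d p : ℕ) [NeZero d] (hp : p.Prime) (I : Finset (ZMod d)) :
    ∃ a : Finset (ZMod d) → ℚ, (∀ J, 0 ≤ a J) ∧
      Lmon d I =
        ∑ J ∈ Finset.univ.powerset.filter (fun J => J.card = I.card),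
          a J • Nmon d p J := by
  rcases I.eq_empty_or_nonempty with rfl | hne
  · obtain ⟨a, ha0, _, heq⟩ := eff_gen (d := d) (p := p) (S := Finset.univ) 1 zero_le_one ∅
      (Finset.empty_subset _) Finset.card_empty
    refine ⟨a, ha0, ?_⟩
    rw [Finset.card_empty, Lmon, Finset.prod_empty]
    simpa [Nmon] using heq
  · set m := I.card with hmdef
    have hm : 1 ≤ m := Finset.card_pos.mpr hne
    have hVcard : (I.image ZMod.val).card = m := by
      rw [Finset.card_image_of_injective I (ZMod.val_injective d)]
    set V := I.image ZMod.val with hV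
    set v : Fin m ↪o ℕ := V.orderEmbOfFin hVcard with hvdef
    have hvd : ∀ k : Fin m, v k < d := by
      intro k
      have hmem : v k ∈ V := V.orderEmbOfFin_mem hVcard k
      obtain ⟨i, _, hval⟩ := Finset.mem_image.mp hmem
      rw [← hval]; exact ZMod.val_lt i
    set w : ℕ → ℕ := fun t => if h : t < m then v ⟨t, h⟩ else v ⟨0, hm⟩ + d with hwdef
    have hw_lt : ∀ t (h : t < m), w t = v ⟨t, h⟩ := fun t h => dif_pos h
    have hw_ge : ∀ t, ¬ t < m → w t = v ⟨0, hm⟩ + d := fun t h => dif_neg h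
    have hwm : w m = w 0 + d := by rw [hw_ge m (lt_irrefl m), hw_lt 0 hm]
    have hwlt : ∀ s, s < m → w s < w (s + 1) := by
      intro s hs
      by_cases h1 : s + 1 < m
      · rw [hw_lt s hs, hw_lt (s + 1) h1]
        exact v.strictMono (Fin.mk_lt_mk.mpr (by omega))
      · rw [hw_lt s hs, hw_ge (s + 1) h1]
        have := hvd ⟨s, hs⟩
        omega
    have hmain := main_w d p m hm w hwlt hwm
    have hIprod : ∏ s ∈ Finset.range m, lcl d ((w s : ℕ) : ZMod d) = Lmon d I := by
      rw [Lmon]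
      apply Finset.prod_bij (fun s _ => ((w s : ℕ) : ZMod d))
      · intro s hs
        rw [Finset.mem_range] at hs
        rw [hw_lt s hs]
        have hmem : v ⟨s, hs⟩ ∈ V := V.orderEmbOfFin_mem hVcard _
        obtain ⟨i, hi, hval⟩ := Finset.mem_image.mp hmem
        rw [← hval, ZMod.natCast_rightInverse i]
        exact hi
      · intro s1 hs1 s2 hs2 heq
        rw [Finset.mem_range] at hs1 hs2
        have hb1 : w s1 < d := by rw [hw_lt s1 hs1]; exact hvd _
        have hb2 : w s2 < d := by rw [hw_lt s2 hs2]; exact hvd _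
        have hws : w s1 = w s2 :=
          natCast_inj_window d (c := 0) (by omega) (by omega) (by omega) (by omega) heq
        rw [hw_lt s1 hs1, hw_lt s2 hs2] at hws
        simpa using congrArg Fin.val (v.injective hws)
      · intro i hi
        have hmem : ZMod.val i ∈ Set.range v := by
          rw [hvdef, Finset.range_orderEmbOfFin]
          exact_mod_cast Finset.mem_image_of_mem _ hi
        obtain ⟨k, hk⟩ := hmem
        refine ⟨k.1, Finset.mem_range.mpr k.2, ?_⟩
        rw [hw_lt k.1 k.2, Fin.eta, hk, ZMod.natCast_rightInverse i]
      · intro s hs; rfl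
    rw [hIprod] at hmain
    set c : ℚ := (p : ℚ) ^ d + (-1) ^ m with hc
    have hcsmul : c • Lmon d I
        = ((p : ZipRing d) ^ d + (-1 : ZipRing d) ^ m) * Lmon d I := by
      rw [rat_smul_def]
      congr 1
      simp only [hc, map_add, map_pow, map_neg, map_one, map_natCast]
    have hcpos : 0 < c := by
      have h2 : (2 : ℚ) ≤ p := by exact_mod_cast hp.two_le
      have h1 : (1 : ℚ) < (p : ℚ) ^ d := one_lt_pow₀ (by linarith) (NeZero.ne d)
      rcases Nat.even_or_odd m with he | ho
      · rw [hc, he.neg_one_pow]; linarith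
      · rw [hc, ho.neg_one_pow]; linarith
    rw [← hcsmul] at hmain
    have hfin := eff_smul c⁻¹ (by positivity) hmain
    rw [smul_smul, inv_mul_cancel₀ (ne_of_gt hcpos), one_smul] at hfin
    obtain ⟨a, ha0, _, heq⟩ := hfin
    exact ⟨a, ha0, heq⟩
end
end

section
/- (Reciprocity.) Let I, K ⊆ ℤ/d with |I| = |K|. Suppose a_J (J ⊆ ℤ/d, |J| = |I|) are rational numbers with L_I = Σ_{|J| = |I|} a_J · N_J in R, and let a^∨_{J'} (J' ⊆ ℤ/d) be the unique rational numbers with P_{K^c} = Σ_{J' ⊆ ℤ/d} a^∨_{J'} · L_{J'} (unique since the L_{J'} form a ℚ-basis of R). Then (p^d + (−1)^{|I|}) · a_K = a^∨_{I^c}. -/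
open MvPolynomial Finset

noncomputable section
set_option synthInstance.maxHeartbeats 800000
set_option maxHeartbeats 1600000

section Helpers

set_option linter.unusedSectionVars false

variable (d : ℕ) [NeZero d]

def mAll : ZMod d →₀ ℕ := ∑ i : ZMod d, Finsupp.single i 1
def eSet (S : Finset (ZMod d)) : ZMod d →₀ ℕ := ∑ i ∈ S, Finsupp.single i 1
def eShift (S : Finset (ZMod d)) : ZMod d →₀ ℕ := ∑ i ∈ S, Finsupp.single (i + 1) 1
lemma mAll_apply (k : ZMod d) : mAll d k = 1 := by
  simp [mAll, Finsupp.finset_sum_apply, Finsupp.single_apply]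

lemma eSet_apply (S : Finset (ZMod d)) (k : ZMod d) :
    eSet d S k = if k ∈ S then 1 else 0 := by
  simp [eSet, Finsupp.finset_sum_apply, Finsupp.single_apply]

lemma eShift_eq_image (S : Finset (ZMod d)) :
    eShift d S = eSet d (S.image (· + 1)) := by
  rw [eSet, Finset.sum_image (by intro x _ y _ h; exact by simpa using h)]
  rfl

lemma eShift_apply (S : Finset (ZMod d)) (k : ZMod d) :
    eShift d S k = if k - 1 ∈ S then 1 else 0 := by
  rw [eShift_eq_image, eSet_apply]
  congr 1
  simp only [Finset.mem_image, eq_iff_iff]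
  constructor
  · rintro ⟨x, hx, rfl⟩; simpa using hx
  · intro h; exact ⟨k - 1, h, by ring⟩

lemma eSet_add_eq_mAll_iff (I J : Finset (ZMod d)) :
    eSet d I + eSet d J = mAll d ↔ J = Iᶜ := by
  constructor
  · intro h
    ext k
    have hk := DFunLike.congr_fun h k
    simp only [Finsupp.add_apply, eSet_apply, mAll_apply, Finset.mem_compl] at hk ⊢
    by_cases h1 : k ∈ I <;> by_cases h2 : k ∈ J <;> simp [h1, h2] at hk ⊢
  · rintro rfl
    ext k
    simp only [Finsupp.add_apply, eSet_apply, mAll_apply, Finset.mem_compl]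
    by_cases h1 : k ∈ I <;> simp [h1]

lemma shift_invariant (S : Finset (ZMod d)) (h : ∀ k, k ∈ S ↔ k + 1 ∈ S) :
    S = ∅ ∨ S = univ := by
  rcases S.eq_empty_or_nonempty with he | ⟨i, hi⟩
  · exact Or.inl he
  · right
    have key : ∀ n : ℕ, i + (n : ZMod d) ∈ S := by
      intro n
      induction n with
      | zero => simpa using hi
      | succ n ih =>
        have := (h (i + n)).mp ih
        push_cast
        rw [← add_assoc]
        exact this
    rw [Finset.eq_univ_iff_forall]
    intro j
    obtain ⟨n, hn⟩ := ZMod.natCast_zmod_surjective (j - i)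
    have := key n
    rw [hn] at this
    simpa using this

lemma eSet_shift_eq_mAll_iff (T : Finset (ZMod d)) :
    eSet d T + eShift d Tᶜ = mAll d ↔ T = univ ∨ T = ∅ := by
  constructor
  · intro h
    have hT : ∀ k, k ∈ T ↔ k + 1 ∈ T := by
      intro k
      have hk := DFunLike.congr_fun h (k + 1)
      simp only [Finsupp.add_apply, eSet_apply, eShift_apply, mAll_apply,
        add_sub_cancel_right, Finset.mem_compl] at hk
      by_cases h1 : k + 1 ∈ T <;> by_cases h2 : k ∈ T <;> simp [h1, h2] at hk ⊢
    rcases shift_invariant d T hT with h | h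
    · exact Or.inr h
    · exact Or.inl h
  · rintro (rfl | rfl) <;> ext k <;>
      simp [Finsupp.add_apply, eSet_apply, eShift_apply, mAll_apply]


-- polynomial representatives
def LP (S : Finset (ZMod d)) : MvPolynomial (ZMod d) ℚ := ∏ i ∈ S, X i
def NPe (p : ℕ) (i : ZMod d) : MvPolynomial (ZMod d) ℚ := C (p : ℚ) * X i - X (i + 1)
def PPe (p : ℕ) (i : ZMod d) : MvPolynomial (ZMod d) ℚ := C (p : ℚ) * X i + X (i + 1)
def NPm (p : ℕ) (J : Finset (ZMod d)) : MvPolynomial (ZMod d) ℚ := ∏ i ∈ J, NPe d p i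
def PPm (p : ℕ) (J : Finset (ZMod d)) : MvPolynomial (ZMod d) ℚ := ∏ i ∈ J, PPe d p i

lemma prod_monomial {α : Type*} (S : Finset α) (s : α → (ZMod d →₀ ℕ)) (r : α → ℚ) :
    ∏ i ∈ S, (monomial (s i) (r i)) = monomial (∑ i ∈ S, s i) (∏ i ∈ S, r i) := by
  classical
  induction S using Finset.cons_induction with
  | empty => simp
  | cons a S ha ih => rw [Finset.prod_cons, Finset.sum_cons, Finset.prod_cons, ih, monomial_mul]

lemma X_eq_monomial (i : ZMod d) : (X i : MvPolynomial (ZMod d) ℚ) = monomial (Finsupp.single i 1) 1 := rfl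

lemma LP_eq (S : Finset (ZMod d)) : LP d S = monomial (eSet d S) 1 := by
  rw [LP, eSet]
  calc ∏ i ∈ S, (X i : MvPolynomial (ZMod d) ℚ)
      = ∏ i ∈ S, monomial (Finsupp.single i 1) 1 := by simp [X_eq_monomial]
    _ = monomial (∑ i ∈ S, Finsupp.single i 1) (∏ i ∈ S, (1:ℚ)) := prod_monomial d S _ _
    _ = _ := by simp

/-- coefficient at a squarefree exponent of anything in the ideal of squares vanishes -/
lemma coeff_zero_of_mem {q : MvPolynomial (ZMod d) ℚ} (hq : q ∈ sqIdeal d)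
    {m : ZMod d →₀ ℕ} (hm : ∀ i, m i ≤ 1) : coeff m q = 0 := by
  have H : ∀ m : ZMod d →₀ ℕ, (∀ i, m i ≤ 1) → coeff m q = 0 := by
   refine Submodule.span_induction (p := fun q _ => ∀ m : ZMod d →₀ ℕ, (∀ i, m i ≤ 1) → coeff m q = 0)
     ?_ ?_ ?_ ?_ hq
   · rintro _ ⟨i, rfl⟩ m hm
     show coeff m (X i ^ 2) = 0
     rw [X_pow_eq_monomial, coeff_monomial, if_neg]
     intro h
     have h2 := DFunLike.congr_fun h i
     simp [Finsupp.single_apply] at h2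
     have := hm i
     omega
   · intro m _; simp
   · intro x y _ _ hx hy m hm
     rw [coeff_add, hx m hm, hy m hm, add_zero]
   · intro r x _ hx m hm
     rw [smul_eq_mul, coeff_mul]
     apply Finset.sum_eq_zero
     rintro ⟨u, v⟩ huv
     rw [Finset.HasAntidiagonal.mem_antidiagonal] at huv
     have hv : ∀ i, v i ≤ 1 := by
       intro i
       have := DFunLike.congr_fun huv i
       simp [Finsupp.add_apply] at this
       have := hm i
       omega
     rw [hx v hv, mul_zero]
  exact H m hm

lemma gen_mem (i : ZMod d) : (X i : MvPolynomial (ZMod d) ℚ) ^ 2 ∈ sqIdeal d :=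
  Ideal.subset_span ⟨i, rfl⟩

/-- The key product expansion. -/
lemma coeff_prod_lin (c e : ZMod d → ℚ) :
    coeff (mAll d) (∏ i : ZMod d, (C (c i) * X i + C (e i) * X (i + 1)))
      = (∏ i : ZMod d, c i) + ∏ i : ZMod d, e i := by
  classical
  rw [Finset.prod_add, coeff_sum]
  have hterm : ∀ T : Finset (ZMod d),
      (∏ i ∈ T, C (c i) * X i) * ∏ i ∈ univ \ T, C (e i) * X (i+1)
        = monomial (eSet d T + eShift d Tᶜ) ((∏ i ∈ T, c i) * ∏ i ∈ Tᶜ, e i) := by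
    intro T
    rw [Finset.compl_eq_univ_sdiff]
    have h1 : (∏ i ∈ T, C (c i) * X i) = monomial (eSet d T) (∏ i ∈ T, c i) := by
      rw [eSet, ← prod_monomial]
      refine Finset.prod_congr rfl fun i _ => ?_
      rw [X_eq_monomial, C_mul_monomial, mul_one]
    have h2 : (∏ i ∈ univ \ T, C (e i) * X (i+1))
        = monomial (eShift d (univ \ T)) (∏ i ∈ univ \ T, e i) := by
      rw [eShift, ← prod_monomial]
      refine Finset.prod_congr rfl fun i _ => ?_
      rw [X_eq_monomial, C_mul_monomial, mul_one]
    rw [h1, h2, monomial_mul]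
  rw [Finset.sum_congr rfl (fun T _ => by rw [hterm T, coeff_monomial])]
  rw [← Finset.sum_filter_add_sum_filter_not univ.powerset (fun T => T = univ ∨ T = ∅)]
  have h0 : ∑ T ∈ univ.powerset.filter (fun T => ¬(T = univ ∨ T = ∅)),
      (if eSet d T + eShift d Tᶜ = mAll d then (∏ i ∈ T, c i) * ∏ i ∈ Tᶜ, e i else 0) = 0 := by
    refine Finset.sum_eq_zero fun T hT => ?_
    rw [Finset.mem_filter] at hT
    rw [if_neg]
    intro h
    exact hT.2 ((eSet_shift_eq_mAll_iff d T).mp h)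
  rw [h0, add_zero]
  have hfil : univ.powerset.filter (fun T => T = univ ∨ T = ∅) = {univ, (∅ : Finset (ZMod d))} := by
    ext T
    simp only [Finset.mem_filter, Finset.mem_powerset, Finset.mem_insert, Finset.mem_singleton]
    constructor
    · exact fun h => h.2
    · intro h; exact ⟨by rcases h with rfl|rfl <;> simp, h⟩
  have hne : (univ : Finset (ZMod d)) ≠ ∅ := Finset.univ_nonempty.ne_empty
  rw [hfil, Finset.sum_pair hne]
  rw [if_pos ((eSet_shift_eq_mAll_iff d univ).mpr (Or.inl rfl)),
    if_pos ((eSet_shift_eq_mAll_iff d ∅).mpr (Or.inr rfl))]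
  simp

lemma mk_LP (S : Finset (ZMod d)) :
    Ideal.Quotient.mkₐ ℚ (sqIdeal d) (LP d S) = Lmon d S := by
  rw [LP, Lmon, map_prod]
  exact Finset.prod_congr rfl fun i _ => rfl

lemma mk_NPe (p : ℕ) (i : ZMod d) :
    Ideal.Quotient.mkₐ ℚ (sqIdeal d) (NPe d p i) = Nelt d p i := by
  rw [NPe, Nelt, map_sub, map_mul, C_eq_coe_nat, map_natCast]
  rfl

lemma mk_PPe (p : ℕ) (i : ZMod d) :
    Ideal.Quotient.mkₐ ℚ (sqIdeal d) (PPe d p i) = Pelt d p i := by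
  rw [PPe, Pelt, map_add, map_mul, C_eq_coe_nat, map_natCast]
  rfl

lemma mk_NPm (p : ℕ) (J : Finset (ZMod d)) :
    Ideal.Quotient.mkₐ ℚ (sqIdeal d) (NPm d p J) = Nmon d p J := by
  rw [NPm, Nmon, map_prod]
  exact Finset.prod_congr rfl fun i _ => mk_NPe d p i

lemma mk_PPm (p : ℕ) (J : Finset (ZMod d)) :
    Ideal.Quotient.mkₐ ℚ (sqIdeal d) (PPm d p J) = Pmon d p J := by
  rw [PPm, Pmon, map_prod]
  exact Finset.prod_congr rfl fun i _ => mk_PPe d p i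

end Helpers

/-- Reciprocity: if `L_I = Σ_{|J|=|I|} a_J N_J` and `P_{K^c} = Σ_{J'} a^∨_{J'} L_{J'}`
(the latter expansion being unique since the `L_{J'}` form a ℚ-basis of `R`), then
`(p^d + (−1)^{|I|}) · a_K = a^∨_{I^c}`. -/
theorem stmt4 (d p : ℕ) [NeZero d] (hp : p.Prime) (I K : Finset (ZMod d))
    (hIK : I.card = K.card)
    (a : Finset (ZMod d) → ℚ)
    (ha : Lmon d I =
      ∑ J ∈ Finset.univ.powerset.filter (fun J => J.card = I.card),
        a J • Nmon d p J)
    (b : Finset (ZMod d) → ℚ)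
    (hb : Pmon d p Kᶜ = ∑ J' ∈ Finset.univ.powerset, b J' • Lmon d J') :
    ((p : ℚ) ^ d + (-1) ^ I.card) * a K = b Iᶜ := by
  classical
  have hmkeq : ∀ x : MvPolynomial (ZMod d) ℚ,
      Ideal.Quotient.mkₐ ℚ (sqIdeal d) x = Ideal.Quotient.mk (sqIdeal d) x :=
    fun x => congrFun (Ideal.Quotient.mkₐ_eq_mk ℚ (sqIdeal d)) x
  set fs := Finset.univ.powerset.filter (fun J : Finset (ZMod d) => J.card = I.card) with hfs
  -- first expansion
  have mem1 : LP d I * PPm d p Kᶜ - ∑ J ∈ fs, a J • (NPm d p J * PPm d p Kᶜ) ∈ sqIdeal d := by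
    rw [← Ideal.Quotient.eq_zero_iff_mem, ← hmkeq]
    rw [map_sub, map_mul, map_sum]
    simp only [map_smul, map_mul, mk_LP, mk_NPm, mk_PPm]
    rw [ha, Finset.sum_mul]
    simp [smul_mul_assoc]
  have hc1 : coeff (mAll d) (LP d I * PPm d p Kᶜ)
      = ∑ J ∈ fs, a J * coeff (mAll d) (NPm d p J * PPm d p Kᶜ) := by
    have h := coeff_zero_of_mem d mem1 (fun i => (mAll_apply d i).le)
    rw [coeff_sub, coeff_sum] at h
    simp only [coeff_smul, smul_eq_mul] at h
    exact sub_eq_zero.mp h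
  -- evaluation of the first expansion
  have hK : K ∈ fs := by
    rw [hfs, Finset.mem_filter]
    exact ⟨Finset.mem_powerset.mpr (Finset.subset_univ K), hIK.symm⟩
  have hRHS : ∑ J ∈ fs, a J * coeff (mAll d) (NPm d p J * PPm d p Kᶜ)
      = a K * ((p : ℚ) ^ d + (-1) ^ K.card) := by
    rw [Finset.sum_eq_single_of_mem K hK]
    · congr 1
      have hprod : NPm d p K * PPm d p Kᶜ =
          ∏ i : ZMod d,
            (C ((p : ℚ)) * X i + C (if i ∈ K then (-1 : ℚ) else 1) * X (i + 1)) := by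
        rw [NPm, PPm, ← Finset.prod_mul_prod_compl K
          (fun i => C ((p : ℚ)) * X i + C (if i ∈ K then (-1 : ℚ) else 1) * X (i + 1))]
        congr 1
        · refine Finset.prod_congr rfl fun i hi => ?_
          rw [if_pos hi, NPe]
          simp only [map_neg, map_one]
          ring
        · refine Finset.prod_congr rfl fun i hi => ?_
          rw [if_neg (Finset.mem_compl.mp hi), PPe]
          simp only [map_one]
          ring
      rw [hprod, coeff_prod_lin]
      congr 1
      · rw [Finset.prod_const, Finset.card_univ, ZMod.card]
      · rw [← Finset.prod_mul_prod_compl K]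
        have e1 : ∏ i ∈ K, (if i ∈ K then (-1 : ℚ) else 1) = (-1) ^ K.card := by
          rw [Finset.prod_congr rfl (fun i hi => if_pos hi), Finset.prod_const]
        have e2 : ∏ i ∈ Kᶜ, (if i ∈ K then (-1 : ℚ) else 1) = 1 := by
          rw [Finset.prod_congr rfl (fun i hi => if_neg (Finset.mem_compl.mp hi)),
            Finset.prod_const, one_pow]
        rw [e1, e2, mul_one]
    · intro J hJ hJK
      have hJc : J.card = K.card := by rw [← hIK]; exact (Finset.mem_filter.mp hJ).2
      have hns : ¬ J ⊆ K := fun hs =>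
        hJK (Finset.eq_of_subset_of_card_le hs hJc.ge)
      obtain ⟨i, hiJ, hiK⟩ := Finset.not_subset.mp hns
      have hmem : NPm d p J * PPm d p Kᶜ ∈ sqIdeal d := by
        rw [NPm, PPm, ← Finset.mul_prod_erase J _ hiJ,
          ← Finset.mul_prod_erase Kᶜ _ (Finset.mem_compl.mpr hiK)]
        have heq : (NPe d p i * ∏ j ∈ J.erase i, NPe d p j) *
            (PPe d p i * ∏ j ∈ Kᶜ.erase i, PPe d p j)
            = X i ^ 2 * (C ((p : ℚ)) ^ 2 *
                ((∏ j ∈ J.erase i, NPe d p j) * ∏ j ∈ Kᶜ.erase i, PPe d p j))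
              - X (i + 1) ^ 2 *
                ((∏ j ∈ J.erase i, NPe d p j) * ∏ j ∈ Kᶜ.erase i, PPe d p j) := by
          rw [NPe, PPe]; ring
        rw [heq]
        exact Ideal.sub_mem _ (Ideal.mul_mem_right _ _ (gen_mem d i))
          (Ideal.mul_mem_right _ _ (gen_mem d (i + 1)))
      rw [coeff_zero_of_mem d hmem (fun j => (mAll_apply d j).le), mul_zero]
  -- second expansion
  have mem2 : LP d I * PPm d p Kᶜ - ∑ J' ∈ Finset.univ.powerset, b J' • (LP d I * LP d J')
      ∈ sqIdeal d := by
    rw [← Ideal.Quotient.eq_zero_iff_mem, ← hmkeq]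
    rw [map_sub, map_mul, map_sum]
    simp only [map_smul, map_mul, mk_LP, mk_PPm]
    rw [hb, Finset.mul_sum]
    simp [mul_smul_comm]
  have hc2 : coeff (mAll d) (LP d I * PPm d p Kᶜ)
      = ∑ J' ∈ Finset.univ.powerset, b J' * coeff (mAll d) (LP d I * LP d J') := by
    have h := coeff_zero_of_mem d mem2 (fun i => (mAll_apply d i).le)
    rw [coeff_sub, coeff_sum] at h
    simp only [coeff_smul, smul_eq_mul] at h
    exact sub_eq_zero.mp h
  have hLL : ∀ J' : Finset (ZMod d),
      coeff (mAll d) (LP d I * LP d J') = if J' = Iᶜ then 1 else 0 := by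
    intro J'
    rw [LP_eq, LP_eq, monomial_mul, one_mul, coeff_monomial]
    exact if_congr (eSet_add_eq_mAll_iff d I J') rfl rfl
  have hc2' : ∑ J' ∈ Finset.univ.powerset, b J' * coeff (mAll d) (LP d I * LP d J')
      = b Iᶜ := by
    rw [Finset.sum_congr rfl (fun J' _ => by rw [hLL J'])]
    simp only [mul_ite, mul_one, mul_zero]
    rw [Finset.sum_ite_eq' Finset.univ.powerset Iᶜ b]
    rw [if_pos (Finset.mem_powerset.mpr (Finset.subset_univ _))]
  have key : a K * ((p : ℚ) ^ d + (-1) ^ K.card) = b Iᶜ := by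
    rw [← hRHS, ← hc1, hc2, hc2']
  rw [hIK, ← key]
  ring

end
end

section
/- (Explicit strata-expansion of Hodge–Chern monomials.) Let I, J ⊆ ℤ/d be nonempty proper subsets with |I| = |J|, and let a(I,J) denote the coefficient of N_J in the unique expansion L_I = Σ_{|J'| = |I|} a(I,J') · N_{J'} in R (unique because the family (N_{J'})_{|J'| = |I|} is linearly independent over ℚ). Let J^c = ⊔_t [a_t, b_t] be the decomposition of the complement J^c into maximal intervals. Then: (1) a(I,J) ≠ 0 if and only if the set [a_t, b_t + 1] \ I^c has exactly one element for every t; (2) if for every t one has [a_t, b_t + 1] \ I^c = {a_t + e_t} with integer 0 ≤ e_t ≤ b_t − a_t + 1, and e(I,J) := Σ_t e_t, then a(I,J) = p^{e(I,J)} / (p^d + (−1)^{|I|}). -/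
open MvPolynomial Finset

noncomputable section

/-- The interval `[a, a+k] = {a, a+1, …, a+k} ⊆ ℤ/d`. -/
def intvl (d : ℕ) (a : ZMod d) (k : ℕ) : Finset (ZMod d) :=
  (Finset.range (k + 1)).image fun j : ℕ => a + (j : ZMod d)

namespace ZipAux

variable {d : ℕ}

/-- exponent vector of a squarefree monomial -/
def eS (S : Finset (ZMod d)) : ZMod d →₀ ℕ := ∑ i ∈ S, Finsupp.single i 1

lemma eS_apply (S : Finset (ZMod d)) (j : ZMod d) :
    eS S j = if j ∈ S then 1 else 0 := by
  classical
  simp [eS, Finsupp.finset_sum_apply, Finsupp.single_apply, Finset.sum_ite_eq' S j (fun _ => 1)]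

lemma coeff_sqIdeal [NeZero d] {f : MvPolynomial (ZMod d) ℚ} (hf : f ∈ sqIdeal d) :
    coeff (eS (univ : Finset (ZMod d))) f = 0 := by
  rw [sqIdeal, Ideal.span, Submodule.mem_span_range_iff_exists_fun] at hf
  obtain ⟨c, rfl⟩ := hf
  rw [coeff_sum]
  refine Finset.sum_eq_zero fun i _ => ?_
  rw [smul_eq_mul, X_pow_eq_monomial, coeff_mul_monomial']
  rw [if_neg]
  intro hle
  have := hle i
  simp [eS_apply] at this

lemma prod_X_eq (S : Finset (ZMod d)) (c : ZMod d → ZMod d) :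
    (∏ i ∈ S, (X (c i) : MvPolynomial (ZMod d) ℚ)) =
      monomial (∑ i ∈ S, Finsupp.single (c i) 1) 1 := by
  classical
  induction S using Finset.cons_induction with
  | empty => simp
  | cons a s ha ih =>
      rw [Finset.prod_cons, Finset.sum_cons, ih, ← pow_one (X (c a) : MvPolynomial (ZMod d) ℚ),
        X_pow_eq_monomial, monomial_mul, one_mul]

lemma GEN [NeZero d] (A S : Finset (ZMod d)) (α β : ZMod d → ℚ) :
    coeff (eS (univ : Finset (ZMod d)))
      ((∏ i ∈ A, X i) * ∏ i ∈ S, (C (α i) * X i + C (β i) * X (i+1))) =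
    ∑ T ∈ S.powerset, (∏ i ∈ T, α i) * (∏ i ∈ S \ T, β i) *
      (if eS A + eS T + eS ((S \ T).image (· + 1)) = eS (univ : Finset (ZMod d))
        then 1 else 0) := by
  classical
  rw [Finset.prod_add, Finset.mul_sum]
  rw [coeff_sum]
  refine Finset.sum_congr rfl fun T hT => ?_
  have h1 : (∏ i ∈ T, (C (α i) * X i : MvPolynomial (ZMod d) ℚ)) =
      C (∏ i ∈ T, α i) * monomial (eS T) 1 := by
    rw [Finset.prod_mul_distrib, map_prod, prod_X_eq]; rfl
  have h2 : (∏ i ∈ S \ T, (C (β i) * X (i+1) : MvPolynomial (ZMod d) ℚ)) =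
      C (∏ i ∈ S \ T, β i) * monomial (eS ((S \ T).image (· + 1))) 1 := by
    rw [Finset.prod_mul_distrib, map_prod, prod_X_eq]
    congr 2
    rw [eS, Finset.sum_image (by intro x _ y _ h; exact add_right_cancel h)]
  rw [h1, h2, prod_X_eq]
  rw [show (∑ i ∈ A, Finsupp.single i 1 : ZMod d →₀ ℕ) = eS A from rfl]
  rw [show (monomial (eS A) (1:ℚ)) * (C (∏ i ∈ T, α i) * (monomial (eS T)) 1 *
        (C (∏ i ∈ S \ T, β i) * (monomial (eS ((S \ T).image (· + 1)))) 1)) =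
      C ((∏ i ∈ T, α i) * (∏ i ∈ S \ T, β i)) *
        ((monomial (eS A)) 1 * (monomial (eS T)) 1 * (monomial (eS ((S \ T).image (· + 1)))) 1)
    from by rw [map_mul]; ring]
  rw [monomial_mul, monomial_mul, coeff_C_mul, coeff_monomial]
  simp [mul_assoc, mul_ite]

lemma cond_iff [NeZero d] (I T C : Finset (ZMod d)) :
    eS I + eS T + eS C = eS (univ : Finset (ZMod d)) ↔
      (Disjoint T C ∧ T ∪ C = Iᶜ) := by
  classical
  have hpt : (eS I + eS T + eS C = eS (univ : Finset (ZMod d))) ↔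
      ∀ j, (if j ∈ I then 1 else 0) + (if j ∈ T then 1 else 0)
            + (if j ∈ C then (1:ℕ) else 0) = 1 := by
    rw [Finsupp.ext_iff]
    refine forall_congr' fun j => ?_
    simp [eS_apply]
  rw [hpt]
  constructor
  · intro h
    constructor
    · rw [Finset.disjoint_left]
      intro j hT hC
      have := h j
      by_cases hI : j ∈ I <;> simp [hI, hT, hC] at this
    · ext j
      have := h j
      simp only [Finset.mem_union, Finset.mem_compl]
      by_cases hI : j ∈ I <;> by_cases hT : j ∈ T <;> by_cases hC : j ∈ C <;>
        simp [hI, hT, hC] at this ⊢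
  · rintro ⟨hdisj, hun⟩ j
    rw [Finset.disjoint_left] at hdisj
    have hun' := Finset.ext_iff.mp hun j
    simp only [Finset.mem_union, Finset.mem_compl] at hun'
    by_cases hI : j ∈ I <;> by_cases hT : j ∈ T <;> by_cases hC : j ∈ C <;>
      simp [hI, hT, hC] at hun' ⊢
    exact hdisj hT hC

/-- a +1-invariant subset of ZMod d is empty or everything -/
lemma shift_inv [NeZero d] {S : Finset (ZMod d)} (h : ∀ x ∈ S, x + 1 ∈ S) (hne : S.Nonempty) :
    S = univ := by
  obtain ⟨x, hx⟩ := hne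
  have key : ∀ n : ℕ, x + (n : ZMod d) ∈ S := by
    intro n
    induction n with
    | zero => simpa using hx
    | succ n ih => push_cast; rw [← add_assoc]; exact h _ ih
  apply Finset.eq_univ_of_forall
  intro y
  have := key (y - x).val
  rwa [ZMod.natCast_val, ZMod.cast_id, add_sub_cancel] at this

-- quotient-side lemmas
lemma lcl_sq (d : ℕ) (i : ZMod d) : lcl d i ^ 2 = 0 := by
  rw [lcl, ← map_pow, Ideal.Quotient.eq_zero_iff_mem]
  exact Ideal.subset_span ⟨i, rfl⟩

lemma Nelt_mul_Pelt (d p : ℕ) (i : ZMod d) : Nelt d p i * Pelt d p i = 0 := by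
  have h1 := lcl_sq d i
  have h2 := lcl_sq d (i + 1)
  rw [Nelt, Pelt]
  linear_combination (p : ZipRing d)^2 * h1 - h2

lemma Nmon_mul_Pmon_eq_zero (d p : ℕ) {J' S : Finset (ZMod d)} {i : ZMod d}
    (hi : i ∈ J') (hi' : i ∈ S) : Nmon d p J' * Pmon d p S = 0 := by
  rw [Nmon, Pmon, ← Finset.mul_prod_erase _ _ hi, ← Finset.mul_prod_erase _ _ hi']
  rw [show Nelt d p i * (∏ x ∈ J'.erase i, Nelt d p x) *
      (Pelt d p i * ∏ x ∈ S.erase i, Pelt d p x) =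
      (Nelt d p i * Pelt d p i) * ((∏ x ∈ J'.erase i, Nelt d p x) *
        ∏ x ∈ S.erase i, Pelt d p x) from by ring]
  rw [Nelt_mul_Pelt, zero_mul]

-- interval lemmas
lemma add_nat_inj [NeZero d] (a : ZMod d) {j₁ j₂ : ℕ} (h1 : j₁ < d) (h2 : j₂ < d)
    (h : a + (j₁ : ZMod d) = a + (j₂ : ZMod d)) : j₁ = j₂ := by
  have h' := add_left_cancel h
  have := congrArg ZMod.val h'
  rwa [ZMod.val_cast_of_lt h1, ZMod.val_cast_of_lt h2] at this

lemma mem_intvl (a : ZMod d) (k : ℕ) (x : ZMod d) :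
    x ∈ intvl d a k ↔ ∃ j, j ≤ k ∧ x = a + (j : ZMod d) := by
  simp [intvl, Finset.mem_image, Finset.mem_range, Nat.lt_succ_iff, eq_comm]

lemma card_intvl [NeZero d] (a : ZMod d) {k : ℕ} (hk : k + 1 ≤ d) :
    (intvl d a k).card = k + 1 := by
  rw [intvl, Finset.card_image_of_injOn, Finset.card_range]
  intro j₁ h₁ j₂ h₂ h
  exact add_nat_inj a (lt_of_lt_of_le (Finset.mem_range.mp h₁) hk)
    (lt_of_lt_of_le (Finset.mem_range.mp h₂) hk) h

lemma intvl_succ (a : ZMod d) (k : ℕ) :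
    intvl d a (k + 1) = intvl d a k ∪ {a + ((k+1 : ℕ) : ZMod d)} := by
  ext x
  simp only [mem_intvl, Finset.mem_union, Finset.mem_singleton]
  constructor
  · rintro ⟨j, hj, rfl⟩
    rcases Nat.lt_or_ge j (k+1) with h | h
    · exact Or.inl ⟨j, by omega, rfl⟩
    · right; congr 1; congr 1; omega
  · rintro (⟨j, hj, rfl⟩ | rfl)
    · exact ⟨j, by omega, rfl⟩
    · exact ⟨k+1, le_refl _, rfl⟩

section INT
variable [NeZero d] {a : ZMod d} {m e : ℕ}

omit [NeZero d] in
lemma mem_S0 (a : ZMod d) (e : ℕ) (x : ZMod d) :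
    x ∈ (range e).image (fun j : ℕ => a + (j : ZMod d)) ↔ ∃ j, j < e ∧ x = a + (j : ZMod d) := by
  simp [Finset.mem_image, Finset.mem_range, eq_comm]

lemma INT (hm : m + 2 ≤ d) (he : e ≤ m + 1)
    (S : Finset (ZMod d)) (hS : S ⊆ intvl d a m)
    (hdj : Disjoint S ((intvl d a m \ S).image (· + 1)))
    (hun : S ∪ (intvl d a m \ S).image (· + 1) = intvl d a (m+1) \ {a + (e : ZMod d)}) :
    S = (range e).image (fun j : ℕ => a + (j : ZMod d)) := by
  have inj : ∀ j₁ j₂ : ℕ, j₁ ≤ m + 1 → j₂ ≤ m + 1 →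
      a + (j₁ : ZMod d) = a + (j₂ : ZMod d) → j₁ = j₂ := fun j₁ j₂ h1 h2 h =>
    add_nat_inj a (by omega) (by omega) h
  have notmem : a + (e : ZMod d) ∉ S ∪ (intvl d a m \ S).image (· + 1) := by
    rw [hun]; simp
  have notmemS : a + (e : ZMod d) ∉ S := fun h => notmem (Finset.mem_union_left _ h)
  have notmemC : a + (e : ZMod d) ∉ (intvl d a m \ S).image (· + 1) :=
    fun h => notmem (Finset.mem_union_right _ h)
  have up : ∀ k, e + k ≤ m → a + ((e + k : ℕ) : ZMod d) ∉ S := by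
    intro k
    induction k with
    | zero => intro _; simpa using notmemS
    | succ k ih =>
        intro hk
        have prev : a + ((e + k : ℕ) : ZMod d) ∉ S := ih (by omega)
        have hmem : a + ((e + k : ℕ) : ZMod d) ∈ intvl d a m \ S := by
          rw [Finset.mem_sdiff]
          exact ⟨(mem_intvl a m _).mpr ⟨e + k, by omega, rfl⟩, prev⟩
        have himg : a + ((e + (k+1) : ℕ) : ZMod d) ∈ (intvl d a m \ S).image (· + 1) := by
          rw [Finset.mem_image]
          refine ⟨_, hmem, ?_⟩
          push_cast
          ring
        exact fun hin => (Finset.disjoint_left.mp hdj hin) himg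
  have dn : ∀ k, k < e → a + ((e - 1 - k : ℕ) : ZMod d) ∈ S := by
    intro k
    induction k with
    | zero =>
        intro h0
        by_contra hnot
        have hmem : a + ((e - 1 : ℕ) : ZMod d) ∈ intvl d a m \ S := by
          rw [Finset.mem_sdiff]
          exact ⟨(mem_intvl a m _).mpr ⟨e - 1, by omega, by norm_num⟩, by simpa using hnot⟩
        apply notmemC
        rw [Finset.mem_image]
        refine ⟨_, hmem, ?_⟩
        have : ((e - 1 : ℕ) : ZMod d) + 1 = (e : ZMod d) := by
          have h1 : (e - 1) + 1 = e := by omega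
          calc ((e - 1 : ℕ) : ZMod d) + 1 = (((e - 1) + 1 : ℕ) : ZMod d) := by push_cast; ring
            _ = (e : ZMod d) := by rw [h1]
        simp only [add_assoc, this]
    | succ k ih =>
        intro hk
        have prev := ih (by omega)
        have hni : a + ((e - 1 - k : ℕ) : ZMod d) ∉ (intvl d a m \ S).image (· + 1) :=
          fun h => (Finset.disjoint_left.mp hdj prev) h
        by_contra hnot
        apply hni
        rw [Finset.mem_image]
        have hmem : a + ((e - 1 - (k+1) : ℕ) : ZMod d) ∈ intvl d a m \ S := by
          rw [Finset.mem_sdiff]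
          exact ⟨(mem_intvl a m _).mpr ⟨e - 1 - (k+1), by omega, rfl⟩, hnot⟩
        refine ⟨_, hmem, ?_⟩
        rw [add_assoc]
        congr 1
        rw [show (e - 1 - k : ℕ) = (e - 1 - (k+1)) + 1 from by omega]
        push_cast
        ring
  ext x
  rw [mem_S0]
  constructor
  · intro hx
    obtain ⟨j, hj, rfl⟩ := (mem_intvl a m x).mp (hS hx)
    refine ⟨j, ?_, rfl⟩
    by_contra hge
    exact up (j - e) (by omega) (by rw [show e + (j - e) = j from by omega]; exact hx)
  · rintro ⟨j, hj, rfl⟩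
    have := dn (e - 1 - j) (by omega)
    rwa [show e - 1 - (e - 1 - j) = j from by omega] at this

end INT

section CALC
variable [NeZero d] {a : ZMod d} {m e : ℕ}

lemma S0_subset (he : e ≤ m + 1) :
    (range e).image (fun j : ℕ => a + (j : ZMod d)) ⊆ intvl d a m := by
  intro x hx
  obtain ⟨j, hj, rfl⟩ := (mem_S0 a e x).mp hx
  exact (mem_intvl a m _).mpr ⟨j, by omega, rfl⟩

lemma mem_sdiff_S0 (hm : m + 2 ≤ d) (he : e ≤ m + 1) (x : ZMod d) :
    x ∈ intvl d a m \ (range e).image (fun j : ℕ => a + (j : ZMod d)) ↔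
      ∃ j, e ≤ j ∧ j ≤ m ∧ x = a + (j : ZMod d) := by
  have inj : ∀ j₁ j₂ : ℕ, j₁ ≤ m + 1 → j₂ ≤ m + 1 →
      a + (j₁ : ZMod d) = a + (j₂ : ZMod d) → j₁ = j₂ := fun j₁ j₂ h1 h2 h =>
    add_nat_inj a (by omega) (by omega) h
  rw [Finset.mem_sdiff, mem_intvl, mem_S0]
  constructor
  · rintro ⟨⟨j, hj, rfl⟩, hns⟩
    refine ⟨j, ?_, hj, rfl⟩
    by_contra hlt
    exact hns ⟨j, by omega, rfl⟩
  · rintro ⟨j, hej, hjm, rfl⟩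
    refine ⟨⟨j, hjm, rfl⟩, ?_⟩
    rintro ⟨j', hj', hx⟩
    have := inj j j' (by omega) (by omega) hx
    omega

lemma mem_shift_S0 (hm : m + 2 ≤ d) (he : e ≤ m + 1) (x : ZMod d) :
    x ∈ (intvl d a m \ (range e).image (fun j : ℕ => a + (j : ZMod d))).image (· + 1) ↔
      ∃ j, e + 1 ≤ j ∧ j ≤ m + 1 ∧ x = a + (j : ZMod d) := by
  rw [Finset.mem_image]
  constructor
  · rintro ⟨y, hy, rfl⟩
    obtain ⟨j, hej, hjm, rfl⟩ := (mem_sdiff_S0 hm he y).mp hy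
    exact ⟨j + 1, by omega, by omega, by push_cast; ring⟩
  · rintro ⟨j, hej, hjm, rfl⟩
    refine ⟨a + ((j - 1 : ℕ) : ZMod d), (mem_sdiff_S0 hm he _).mpr ⟨j - 1, by omega, by omega, rfl⟩, ?_⟩
    have h1 : (j - 1) + 1 = j := by omega
    calc a + ((j - 1 : ℕ) : ZMod d) + 1 = a + (((j - 1) + 1 : ℕ) : ZMod d) := by push_cast; ring
      _ = a + (j : ZMod d) := by rw [h1]

lemma calc_disj (hm : m + 2 ≤ d) (he : e ≤ m + 1) :
    Disjoint ((range e).image (fun j : ℕ => a + (j : ZMod d)))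
      ((intvl d a m \ (range e).image (fun j : ℕ => a + (j : ZMod d))).image (· + 1)) := by
  rw [Finset.disjoint_left]
  intro x hx hx'
  obtain ⟨j, hj, rfl⟩ := (mem_S0 a e x).mp hx
  obtain ⟨j', hej', hjm', hx'⟩ := (mem_shift_S0 hm he _).mp hx'
  have := add_nat_inj a (show j < d by omega) (show j' < d by omega) hx'
  omega

lemma calc_union (hm : m + 2 ≤ d) (he : e ≤ m + 1) :
    (range e).image (fun j : ℕ => a + (j : ZMod d)) ∪
      (intvl d a m \ (range e).image (fun j : ℕ => a + (j : ZMod d))).image (· + 1) =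
    intvl d a (m+1) \ {a + (e : ZMod d)} := by
  ext x
  rw [Finset.mem_union, mem_S0, mem_shift_S0 hm he, Finset.mem_sdiff, mem_intvl,
    Finset.mem_singleton]
  constructor
  · rintro (⟨j, hj, rfl⟩ | ⟨j, hej, hjm, rfl⟩) <;>
      refine ⟨⟨j, by omega, rfl⟩, fun hx => ?_⟩ <;>
      · have := add_nat_inj a (show j < d by omega) (show e < d by omega) hx
        omega
  · rintro ⟨⟨j, hj, rfl⟩, hne⟩
    have hje : j ≠ e := fun h => hne (by rw [h])
    rcases Nat.lt_or_ge j e with h | h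
    · exact Or.inl ⟨j, h, rfl⟩
    · exact Or.inr ⟨j, by omega, hj, rfl⟩

end CALC

section GLOBAL
variable [NeZero d] {J : Finset (ZMod d)} {ι : Type} [Fintype ι] [DecidableEq ι]
  {st : ι → ZMod d} {len : ι → ℕ}

/-- notation for the complement-shift set -/
def Cset (J : Finset (ZMod d)) (T : Finset (ZMod d)) : Finset (ZMod d) :=
  ((Jᶜ \ T).image (· + 1))

lemma len_bound (hJne : J.Nonempty)
    (hcover : Jᶜ = Finset.univ.biUnion fun t => intvl d (st t) (len t)) (t : ι) :
    len t + 2 ≤ d := by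
  by_contra hlt
  have hall : intvl d (st t) (len t) = univ := by
    apply Finset.eq_univ_of_forall
    intro x
    rw [mem_intvl]
    refine ⟨(x - st t).val, by have := (x - st t).val_lt; omega, ?_⟩
    rw [ZMod.natCast_val, ZMod.cast_id, add_sub_cancel]
  have hsub : intvl d (st t) (len t) ⊆ Jᶜ := by
    rw [hcover]; exact Finset.subset_biUnion_of_mem (fun t => intvl d (st t) (len t)) (mem_univ t)
  rw [hall] at hsub
  have : Jᶜ = univ := Finset.eq_univ_of_forall fun x => hsub (mem_univ x)
  rw [← Finset.compl_empty] at this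
  exact hJne.ne_empty (compl_injective this)

lemma V_subset_Jc (hcover : Jᶜ = Finset.univ.biUnion fun t => intvl d (st t) (len t)) (t : ι) :
    intvl d (st t) (len t) ⊆ Jᶜ := by
  rw [hcover]; exact Finset.subset_biUnion_of_mem (fun t => intvl d (st t) (len t)) (mem_univ t)

lemma V_subset_W (t : ι) : intvl d (st t) (len t) ⊆ intvl d (st t) (len t + 1) := by
  intro x hx
  obtain ⟨j, hj, rfl⟩ := (mem_intvl _ _ _).mp hx
  exact (mem_intvl _ _ _).mpr ⟨j, by omega, rfl⟩

lemma shiftV_subset_W (t : ι) {B : Finset (ZMod d)} (hB : B ⊆ intvl d (st t) (len t)) :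
    B.image (· + 1) ⊆ intvl d (st t) (len t + 1) := by
  intro x hx
  rw [Finset.mem_image] at hx
  obtain ⟨y, hy, rfl⟩ := hx
  obtain ⟨j, hj, rfl⟩ := (mem_intvl _ _ _).mp (hB hy)
  refine (mem_intvl _ _ _).mpr ⟨j + 1, by omega, by push_cast; ring⟩

lemma W_disjoint (hcover : Jᶜ = Finset.univ.biUnion fun t => intvl d (st t) (len t))
    (hdisj : ∀ s t : ι, s ≠ t →
      Disjoint (intvl d (st s) (len s)) (intvl d (st t) (len t)))
    (hmaxr : ∀ t : ι, st t + (len t : ZMod d) + 1 ∉ (Jᶜ : Finset (ZMod d)))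
    {s t : ι} (hst : s ≠ t) :
    Disjoint (intvl d (st s) (len s + 1)) (intvl d (st t) (len t + 1)) := by
  have hend : ∀ u : ι, st u + (((len u + 1 : ℕ)) : ZMod d) ∉ Jᶜ := by
    intro u
    have := hmaxr u
    push_cast
    rwa [← add_assoc]
  rw [Finset.disjoint_left]
  intro x hxs hxt
  rw [intvl_succ] at hxs hxt
  rcases Finset.mem_union.mp hxs with hs | hs <;> rcases Finset.mem_union.mp hxt with ht | ht
  · exact Finset.disjoint_left.mp (hdisj s t hst) hs ht
  · rw [Finset.mem_singleton] at ht
    exact hend t (ht ▸ V_subset_Jc hcover s hs)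
  · rw [Finset.mem_singleton] at hs
    exact hend s (hs ▸ V_subset_Jc hcover t ht)
  · rw [Finset.mem_singleton] at hs ht
    -- x - 1 lies in both intervals
    have h1 : st s + ((len s : ℕ) : ZMod d) ∈ intvl d (st s) (len s) :=
      (mem_intvl _ _ _).mpr ⟨len s, le_refl _, rfl⟩
    have h2 : st t + ((len t : ℕ) : ZMod d) ∈ intvl d (st t) (len t) :=
      (mem_intvl _ _ _).mpr ⟨len t, le_refl _, rfl⟩
    have heq : st s + ((len s : ℕ) : ZMod d) = st t + ((len t : ℕ) : ZMod d) := by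
      have h0 := hs.symm.trans ht
      push_cast at h0
      apply add_right_cancel (b := (1 : ZMod d))
      linear_combination h0
    exact Finset.disjoint_left.mp (hdisj s t hst) h1 (heq ▸ h2)

lemma Jc_card (hJne : J.Nonempty)
    (hcover : Jᶜ = Finset.univ.biUnion fun t => intvl d (st t) (len t))
    (hdisj : ∀ s t : ι, s ≠ t →
      Disjoint (intvl d (st s) (len s)) (intvl d (st t) (len t))) :
    Jᶜ.card = ∑ t : ι, (len t + 1) := by
  rw [hcover, Finset.card_biUnion (fun s _ t _ h => hdisj s t h)]
  exact Finset.sum_congr rfl fun t _ =>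
    card_intvl _ (by have := len_bound hJne hcover t; omega)

lemma T_inter_W (hJne : J.Nonempty)
    (hcover : Jᶜ = Finset.univ.biUnion fun t => intvl d (st t) (len t))
    (hdisj : ∀ s t : ι, s ≠ t →
      Disjoint (intvl d (st s) (len s)) (intvl d (st t) (len t)))
    (hmaxr : ∀ t : ι, st t + (len t : ZMod d) + 1 ∉ (Jᶜ : Finset (ZMod d)))
    {T : Finset (ZMod d)} (hT : T ⊆ Jᶜ) (t : ι) :
    T ∩ intvl d (st t) (len t + 1) = T ∩ intvl d (st t) (len t) := by
  apply Finset.Subset.antisymm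
  · intro x hx
    rw [Finset.mem_inter] at hx ⊢
    obtain ⟨hxT, hxW⟩ := hx
    have : x ∈ Jᶜ := hT hxT
    rw [hcover, Finset.mem_biUnion] at this
    obtain ⟨s, _, hs⟩ := this
    by_cases hst : s = t
    · exact ⟨hxT, hst ▸ hs⟩
    · exfalso
      exact Finset.disjoint_left.mp (W_disjoint hcover hdisj hmaxr hst) (V_subset_W s hs) hxW
  · intro x hx
    rw [Finset.mem_inter] at hx ⊢
    exact ⟨hx.1, V_subset_W t hx.2⟩

lemma C_inter_W (hJne : J.Nonempty)
    (hcover : Jᶜ = Finset.univ.biUnion fun t => intvl d (st t) (len t))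
    (hdisj : ∀ s t : ι, s ≠ t →
      Disjoint (intvl d (st s) (len s)) (intvl d (st t) (len t)))
    (hmaxr : ∀ t : ι, st t + (len t : ZMod d) + 1 ∉ (Jᶜ : Finset (ZMod d)))
    (T : Finset (ZMod d)) (t : ι) :
    Cset J T ∩ intvl d (st t) (len t + 1) =
      (intvl d (st t) (len t) \ T).image (· + 1) := by
  apply Finset.Subset.antisymm
  · intro x hx
    rw [Finset.mem_inter] at hx
    obtain ⟨hxC, hxW⟩ := hx
    rw [Cset, Finset.mem_image] at hxC
    obtain ⟨y, hy, rfl⟩ := hxC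
    rw [Finset.mem_sdiff] at hy
    obtain ⟨hyJc, hyT⟩ := hy
    rw [hcover, Finset.mem_biUnion] at hyJc
    obtain ⟨s, _, hs⟩ := hyJc
    have hyW : y + 1 ∈ intvl d (st s) (len s + 1) :=
      shiftV_subset_W s (Finset.Subset.refl _) (Finset.mem_image_of_mem _ hs)
    by_cases hst : s = t
    · subst hst
      exact Finset.mem_image_of_mem _ (Finset.mem_sdiff.mpr ⟨hs, hyT⟩)
    · exfalso
      exact Finset.disjoint_left.mp (W_disjoint hcover hdisj hmaxr hst) hyW hxW
  · intro x hx
    rw [Finset.mem_image] at hx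
    obtain ⟨y, hy, rfl⟩ := hx
    rw [Finset.mem_sdiff] at hy
    rw [Finset.mem_inter]
    constructor
    · rw [Cset, Finset.mem_image]
      exact ⟨y, Finset.mem_sdiff.mpr ⟨V_subset_Jc hcover t hy.1, hy.2⟩, rfl⟩
    · exact shiftV_subset_W t Finset.sdiff_subset
        (Finset.mem_image_of_mem _ (Finset.mem_sdiff.mpr hy))

end GLOBAL

section MAIN
variable [NeZero d] {I J : Finset (ZMod d)} {ι : Type} [Fintype ι] [DecidableEq ι]
  {st : ι → ZMod d} {len : ι → ℕ}

/-- the canonical T for given miss positions e -/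
def T0 (st : ι → ZMod d) (e : ι → ℕ) : Finset (ZMod d) :=
  Finset.univ.biUnion fun t => (range (e t)).image fun j : ℕ => st t + (j : ZMod d)

lemma sdiff_inter_T (V T : Finset (ZMod d)) : V \ (T ∩ V) = V \ T := by
  ext x; simp only [Finset.mem_sdiff, Finset.mem_inter]; tauto

variable (hJne : J.Nonempty)
  (hcover : Jᶜ = Finset.univ.biUnion fun t => intvl d (st t) (len t))
  (hdisj : ∀ s t : ι, s ≠ t →
    Disjoint (intvl d (st s) (len s)) (intvl d (st t) (len t)))
  (hmaxr : ∀ t : ι, st t + (len t : ZMod d) + 1 ∉ (Jᶜ : Finset (ZMod d)))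

include hJne hcover hdisj hmaxr

lemma loc_decomp {T : Finset (ZMod d)} (hT : T ⊆ Jᶜ)
    (hun : T ∪ Cset J T = Iᶜ) (t : ι) :
    Iᶜ ∩ intvl d (st t) (len t + 1) =
      (T ∩ intvl d (st t) (len t)) ∪ (intvl d (st t) (len t) \ T).image (· + 1) := by
  rw [← hun, Finset.union_inter_distrib_right, T_inter_W hJne hcover hdisj hmaxr hT,
    C_inter_W hJne hcover hdisj hmaxr]

lemma core2 {T : Finset (ZMod d)} (hT : T ⊆ Jᶜ)
    (hdj : Disjoint T (Cset J T)) (hun : T ∪ Cset J T = Iᶜ) (t : ι) :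
    (intvl d (st t) (len t + 1) \ Iᶜ).card = 1 := by
  have hlen := len_bound hJne hcover t
  have hVW := V_subset_W (d := d) (st := st) (len := len) t
  have hsubdj : Disjoint (T ∩ intvl d (st t) (len t))
      ((intvl d (st t) (len t) \ T).image (· + 1)) := by
    have h1 : (intvl d (st t) (len t) \ T).image (· + 1) ⊆ Cset J T := by
      rw [Cset]
      exact Finset.image_subset_image
        (Finset.sdiff_subset_sdiff (V_subset_Jc hcover t) (Finset.Subset.refl _))
    exact Finset.disjoint_of_subset_left Finset.inter_subset_left
      (Finset.disjoint_of_subset_right h1 hdj)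
  have hcardIW : (Iᶜ ∩ intvl d (st t) (len t + 1)).card = len t + 1 := by
    rw [loc_decomp hJne hcover hdisj hmaxr hT hun t,
      Finset.card_union_of_disjoint hsubdj,
      Finset.card_image_of_injective _ (add_left_injective 1),
      Finset.inter_comm, Finset.card_inter_add_card_sdiff]
    exact card_intvl _ (by omega)
  have hWcard : (intvl d (st t) (len t + 1)).card = len t + 2 :=
    card_intvl _ (by omega)
  have h2 := Finset.card_sdiff_add_card_inter (intvl d (st t) (len t + 1)) Iᶜ
  rw [Finset.inter_comm] at hcardIW
  omega

lemma core_uniq {e : ι → ℕ} (he : ∀ t, e t ≤ len t + 1)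
    (hsing : ∀ t : ι, intvl d (st t) (len t + 1) \ Iᶜ = {st t + (e t : ZMod d)})
    {T : Finset (ZMod d)} (hT : T ⊆ Jᶜ) (hdj : Disjoint T (Cset J T))
    (hun : T ∪ Cset J T = Iᶜ) :
    T = T0 st e := by
  have hloc : ∀ t : ι, T ∩ intvl d (st t) (len t) =
      (range (e t)).image fun j : ℕ => st t + (j : ZMod d) := by
    intro t
    have hlen := len_bound hJne hcover t
    have hVT : intvl d (st t) (len t) \ (T ∩ intvl d (st t) (len t)) =
        intvl d (st t) (len t) \ T := sdiff_inter_T _ _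
    have hsubdj : Disjoint (T ∩ intvl d (st t) (len t))
        ((intvl d (st t) (len t) \ T).image (· + 1)) := by
      have h1 : (intvl d (st t) (len t) \ T).image (· + 1) ⊆ Cset J T := by
        rw [Cset]
        exact Finset.image_subset_image
          (Finset.sdiff_subset_sdiff (V_subset_Jc hcover t) (Finset.Subset.refl _))
      exact Finset.disjoint_of_subset_left Finset.inter_subset_left
        (Finset.disjoint_of_subset_right h1 hdj)
    have hWI : intvl d (st t) (len t + 1) ∩ Iᶜ =
        intvl d (st t) (len t + 1) \ {st t + (e t : ZMod d)} := by
      rw [← hsing t, Finset.sdiff_sdiff_self_left]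
    apply INT hlen (he t) _ Finset.inter_subset_right (hVT ▸ hsubdj)
    rw [hVT, ← loc_decomp hJne hcover hdisj hmaxr hT hun t, Finset.inter_comm, hWI]
  ext x
  constructor
  · intro hx
    have hxJc := hT hx
    rw [hcover, Finset.mem_biUnion] at hxJc
    obtain ⟨t, _, ht⟩ := hxJc
    rw [T0, Finset.mem_biUnion]
    exact ⟨t, mem_univ t, (hloc t) ▸ Finset.mem_inter.mpr ⟨hx, ht⟩⟩
  · intro hx
    rw [T0, Finset.mem_biUnion] at hx
    obtain ⟨t, _, ht⟩ := hx
    have := (hloc t) ▸ ht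
    exact (Finset.mem_inter.mp this).1

lemma T0_subset {e : ι → ℕ} (he : ∀ t, e t ≤ len t + 1) : T0 st e ⊆ Jᶜ := by
  rw [T0]
  apply Finset.biUnion_subset.mpr
  intro t _
  exact (S0_subset (he t)).trans (V_subset_Jc hcover t)

lemma T0_inter_V {e : ι → ℕ} (he : ∀ t, e t ≤ len t + 1) (t : ι) :
    T0 st e ∩ intvl d (st t) (len t) =
      (range (e t)).image fun j : ℕ => st t + (j : ZMod d) := by
  apply Finset.Subset.antisymm
  · intro x hx
    rw [Finset.mem_inter, T0, Finset.mem_biUnion] at hx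
    obtain ⟨⟨s, _, hs⟩, hxV⟩ := hx
    by_cases hst : s = t
    · exact hst ▸ hs
    · exfalso
      exact Finset.disjoint_left.mp (W_disjoint hcover hdisj hmaxr hst)
        (V_subset_W s (S0_subset (he s) hs)) (V_subset_W t hxV)
  · intro x hx
    rw [Finset.mem_inter]
    refine ⟨?_, S0_subset (he t) hx⟩
    rw [T0, Finset.mem_biUnion]
    exact ⟨t, mem_univ t, hx⟩

lemma T0_union {e : ι → ℕ} (he : ∀ t, e t ≤ len t + 1)
    (hsing : ∀ t : ι, intvl d (st t) (len t + 1) \ Iᶜ = {st t + (e t : ZMod d)})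
    (hIcard : Iᶜ.card = Jᶜ.card) :
    Disjoint (T0 st e) (Cset J (T0 st e)) ∧ T0 st e ∪ Cset J (T0 st e) = Iᶜ := by
  have hT0 : T0 st e ⊆ Jᶜ := T0_subset hJne hcover hdisj hmaxr he
  have hVT0 : ∀ t : ι, intvl d (st t) (len t) \ T0 st e =
      intvl d (st t) (len t) \ ((range (e t)).image fun j : ℕ => st t + (j : ZMod d)) := by
    intro t
    rw [← T0_inter_V hJne hcover hdisj hmaxr he t, sdiff_inter_T]
  -- disjointness
  have hdj : Disjoint (T0 st e) (Cset J (T0 st e)) := by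
    rw [Finset.disjoint_left]
    intro x hxT hxC
    rw [T0, Finset.mem_biUnion] at hxT
    obtain ⟨t, _, hxS⟩ := hxT
    have hlen := len_bound hJne hcover t
    have hxW : x ∈ intvl d (st t) (len t + 1) := V_subset_W t (S0_subset (he t) hxS)
    have hxCW : x ∈ Cset J (T0 st e) ∩ intvl d (st t) (len t + 1) :=
      Finset.mem_inter.mpr ⟨hxC, hxW⟩
    rw [C_inter_W hJne hcover hdisj hmaxr, hVT0 t] at hxCW
    exact Finset.disjoint_left.mp (calc_disj hlen (he t)) hxS hxCW
  refine ⟨hdj, ?_⟩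
  -- per-interval identity
  have hWIc : ∀ t : ι, intvl d (st t) (len t + 1) ∩ Iᶜ =
      intvl d (st t) (len t + 1) \ {st t + (e t : ZMod d)} := by
    intro t
    rw [← hsing t, Finset.sdiff_sdiff_self_left]
  have hstep : ∀ t : ι, (T0 st e ∪ Cset J (T0 st e)) ∩ intvl d (st t) (len t + 1) =
      intvl d (st t) (len t + 1) ∩ Iᶜ := by
    intro t
    have hlen := len_bound hJne hcover t
    rw [Finset.union_inter_distrib_right, T_inter_W hJne hcover hdisj hmaxr hT0,
      T0_inter_V hJne hcover hdisj hmaxr he t,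
      C_inter_W hJne hcover hdisj hmaxr, hVT0 t, calc_union hlen (he t), hWIc t]
  -- both sides inside ∪ W
  have hTC_sub : T0 st e ∪ Cset J (T0 st e) ⊆
      Finset.univ.biUnion fun t => intvl d (st t) (len t + 1) := by
    intro x hx
    rcases Finset.mem_union.mp hx with hx | hx
    · have := hT0 hx
      rw [hcover, Finset.mem_biUnion] at this
      obtain ⟨t, _, ht⟩ := this
      exact Finset.mem_biUnion.mpr ⟨t, mem_univ t, V_subset_W t ht⟩
    · rw [Cset, Finset.mem_image] at hx
      obtain ⟨y, hy, rfl⟩ := hx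
      have := (Finset.mem_sdiff.mp hy).1
      rw [hcover, Finset.mem_biUnion] at this
      obtain ⟨t, _, ht⟩ := this
      exact Finset.mem_biUnion.mpr ⟨t, mem_univ t,
        shiftV_subset_W t (Finset.Subset.refl _) (Finset.mem_image_of_mem _ ht)⟩
  -- Iᶜ is the union of its W-pieces
  have hIc_eq : Finset.univ.biUnion (fun t => intvl d (st t) (len t + 1) ∩ Iᶜ) = Iᶜ := by
    apply Finset.eq_of_subset_of_card_le
    · intro x hx
      rw [Finset.mem_biUnion] at hx
      obtain ⟨t, _, ht⟩ := hx
      exact (Finset.mem_inter.mp ht).2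
    · rw [Finset.card_biUnion]
      · rw [hIcard, Jc_card hJne hcover hdisj]
        apply Finset.sum_le_sum
        intro t _
        have hlen := len_bound hJne hcover t
        have h1 := Finset.card_sdiff_add_card_inter (intvl d (st t) (len t + 1)) Iᶜ
        rw [hsing t, Finset.card_singleton, card_intvl _ (by omega)] at h1
        omega
      · intro s _ t hst h
        exact Finset.disjoint_of_subset_left Finset.inter_subset_left
          (Finset.disjoint_of_subset_right Finset.inter_subset_left
            (W_disjoint hcover hdisj hmaxr h))
  ext x
  constructor
  · intro hx
    have := hTC_sub hx
    rw [Finset.mem_biUnion] at this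
    obtain ⟨t, _, ht⟩ := this
    have := (hstep t) ▸ Finset.mem_inter.mpr ⟨hx, ht⟩
    exact (Finset.mem_inter.mp this).2
  · intro hx
    rw [← hIc_eq, Finset.mem_biUnion] at hx
    obtain ⟨t, _, ht⟩ := hx
    have := (hstep t).symm ▸ ht
    exact (Finset.mem_inter.mp this).1

lemma T0_card {e : ι → ℕ} (he : ∀ t, e t ≤ len t + 1) :
    (T0 st e).card = ∑ t : ι, e t := by
  rw [T0, Finset.card_biUnion]
  · refine Finset.sum_congr rfl fun t _ => ?_
    have hlen := len_bound hJne hcover t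
    rw [Finset.card_image_of_injOn, Finset.card_range]
    intro j₁ h₁ j₂ h₂ h
    have h1 := Finset.mem_range.mp h₁
    have h2 := Finset.mem_range.mp h₂
    exact add_nat_inj (st t) (by have := he t; omega) (by have := he t; omega) h
  · intro s _ t _ hst
    have h1 : ((range (e s)).image fun j : ℕ => st s + (j : ZMod d)) ⊆
        intvl d (st s) (len s + 1) := (S0_subset (he s)).trans (V_subset_W s)
    have h2 : ((range (e t)).image fun j : ℕ => st t + (j : ZMod d)) ⊆
        intvl d (st t) (len t + 1) := (S0_subset (he t)).trans (V_subset_W t)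
    exact Finset.disjoint_of_subset_left h1
      (Finset.disjoint_of_subset_right h2 (W_disjoint hcover hdisj hmaxr hst))

end MAIN

section ALG
variable [NeZero d] {p : ℕ}

lemma mk_Lmon (I : Finset (ZMod d)) :
    Lmon d I = Ideal.Quotient.mk (sqIdeal d) (∏ i ∈ I, X i) := by
  rw [Lmon, map_prod]; rfl

lemma mk_natCast_C : ((p : ℕ) : ZipRing d) = Ideal.Quotient.mk (sqIdeal d) (C (p : ℚ)) := by
  rw [map_natCast (C : ℚ →+* MvPolynomial (ZMod d) ℚ) p, map_natCast]

lemma mk_Pmon (S : Finset (ZMod d)) :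
    Pmon d p S = Ideal.Quotient.mk (sqIdeal d)
      (∏ i ∈ S, (C (p : ℚ) * X i + C 1 * X (i + 1))) := by
  rw [Pmon, map_prod]
  refine Finset.prod_congr rfl fun i _ => ?_
  rw [Pelt, lcl, lcl, mk_natCast_C, ← map_mul, ← map_add]
  congr 1
  rw [C_1, one_mul]

lemma mk_Nmon (S : Finset (ZMod d)) :
    Nmon d p S = Ideal.Quotient.mk (sqIdeal d)
      (∏ i ∈ S, (C (p : ℚ) * X i + C (-1) * X (i + 1))) := by
  rw [Nmon, map_prod]
  refine Finset.prod_congr rfl fun i _ => ?_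
  rw [Nelt, lcl, lcl, mk_natCast_C, ← map_mul, ← map_sub]
  congr 1
  rw [show (C (-1 : ℚ) : MvPolynomial (ZMod d) ℚ) = -1 from by simp, neg_one_mul,
    ← sub_eq_add_neg]

lemma NP_eq (J : Finset (ZMod d)) :
    Nmon d p J * Pmon d p Jᶜ = Ideal.Quotient.mk (sqIdeal d)
      (∏ i ∈ (univ : Finset (ZMod d)),
        (C (p : ℚ) * X i + C (if i ∈ J then (-1 : ℚ) else 1) * X (i + 1))) := by
  rw [mk_Nmon, mk_Pmon, ← map_mul]
  congr 1
  rw [show (univ : Finset (ZMod d)) = J ∪ Jᶜ from (Finset.union_compl J).symm,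
    Finset.prod_union disjoint_compl_right]
  congr 1
  · exact Finset.prod_congr rfl fun i hi => by rw [if_pos hi]
  · exact Finset.prod_congr rfl fun i hi => by rw [if_neg (Finset.mem_compl.mp hi)]

lemma coeff_eq_of_mk_eq {f g : MvPolynomial (ZMod d) ℚ}
    (h : Ideal.Quotient.mk (sqIdeal d) f = Ideal.Quotient.mk (sqIdeal d) g) :
    coeff (eS (univ : Finset (ZMod d))) f = coeff (eS (univ : Finset (ZMod d))) g := by
  rw [Ideal.Quotient.eq] at h
  have := coeff_sqIdeal h
  rwa [coeff_sub, sub_eq_zero] at this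

lemma smul_mk (q : ℚ) (f : MvPolynomial (ZMod d) ℚ) :
    q • (Ideal.Quotient.mk (sqIdeal d) f) = Ideal.Quotient.mk (sqIdeal d) (C q * f) := by
  rw [← MvPolynomial.smul_eq_C_mul, ← Ideal.Quotient.mkₐ_eq_mk ℚ (sqIdeal d)]
  exact (map_smul (Ideal.Quotient.mkₐ ℚ (sqIdeal d)) q f).symm

lemma NP_cond_char (T : Finset (ZMod d)) :
    (eS (∅ : Finset (ZMod d)) + eS T + eS (((univ : Finset (ZMod d)) \ T).image (· + 1)) =
      eS (univ : Finset (ZMod d))) ↔ (T = ∅ ∨ T = univ) := by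
  rw [cond_iff]
  constructor
  · rintro ⟨hdj, hun⟩
    rw [Finset.compl_empty] at hun
    have hsub : ((univ : Finset (ZMod d)) \ T).image (· + 1) ⊆ Tᶜ := by
      intro x hx
      rw [Finset.mem_compl]
      exact fun hT => Finset.disjoint_left.mp hdj hT hx
    have hsd : ((univ : Finset (ZMod d)) \ T) = Tᶜ := (Finset.compl_eq_univ_sdiff T).symm
    have hcardsame : (((univ : Finset (ZMod d)) \ T).image (· + 1)).card = Tᶜ.card := by
      rw [Finset.card_image_of_injective _ (add_left_injective 1), hsd]
    have heq : ((univ : Finset (ZMod d)) \ T).image (· + 1) = Tᶜ :=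
      Finset.eq_of_subset_of_card_le hsub (le_of_eq hcardsame.symm)
    by_cases hne : Tᶜ.Nonempty
    · left
      have hTc : Tᶜ = univ := by
        apply shift_inv _ hne
        intro x hx
        rw [← heq]
        exact Finset.mem_image_of_mem _ (hsd ▸ hx)
      rwa [Finset.compl_eq_univ_iff] at hTc
    · right
      rw [Finset.not_nonempty_iff_eq_empty, Finset.compl_eq_empty_iff] at hne
      exact hne
  · rintro (rfl | rfl)
    · refine ⟨Finset.disjoint_empty_left _, ?_⟩
      rw [Finset.empty_union, Finset.sdiff_empty, Finset.compl_empty]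
      apply Finset.eq_univ_of_forall
      intro x
      exact Finset.mem_image.mpr ⟨x - 1, mem_univ _, by ring⟩
    · refine ⟨?_, ?_⟩
      · rw [Finset.sdiff_self, Finset.image_empty]
        exact Finset.disjoint_empty_right _
      · rw [Finset.sdiff_self, Finset.image_empty, Finset.union_empty, Finset.compl_empty]

lemma NPcoeff (J : Finset (ZMod d)) :
    coeff (eS (univ : Finset (ZMod d)))
      (∏ i ∈ (univ : Finset (ZMod d)),
        (C (p : ℚ) * X i + C (if i ∈ J then (-1 : ℚ) else 1) * X (i + 1))) =
    (p : ℚ) ^ d + (-1) ^ J.card := by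
  have hg := GEN (d := d) ∅ univ (fun _ => (p : ℚ)) (fun i => if i ∈ J then (-1 : ℚ) else 1)
  simp only [Finset.prod_empty, one_mul] at hg
  rw [hg]
  have hpair : ({∅, univ} : Finset (Finset (ZMod d))) ⊆ univ.powerset :=
    fun x _ => Finset.mem_powerset.mpr (Finset.subset_univ x)
  rw [← Finset.sum_subset hpair ?_]
  · have hne : (∅ : Finset (ZMod d)) ≠ univ := Ne.symm Finset.univ_nonempty.ne_empty
    rw [Finset.sum_pair hne]
    have t1 : (∏ i ∈ (∅ : Finset (ZMod d)), (p:ℚ)) = 1 := Finset.prod_empty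
    have t2 : (∏ i ∈ (univ : Finset (ZMod d)) \ ∅, (if i ∈ J then (-1 : ℚ) else 1)) =
        (-1) ^ J.card := by
      rw [Finset.sdiff_empty, ← Finset.prod_filter_mul_prod_filter_not univ (· ∈ J)]
      have h1 : (univ : Finset (ZMod d)).filter (· ∈ J) = J := by ext x; simp
      have h2 : ∏ i ∈ (univ : Finset (ZMod d)).filter (fun i => ¬ i ∈ J),
          (if i ∈ J then (-1 : ℚ) else 1) = 1 :=
        Finset.prod_eq_one fun i hi => if_neg (Finset.mem_filter.mp hi).2
      rw [h1, h2, mul_one]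
      rw [Finset.prod_congr rfl (fun i hi => if_pos hi), Finset.prod_const]
    have t3 : (∏ i ∈ (univ : Finset (ZMod d)), (p:ℚ)) = (p : ℚ) ^ d := by
      rw [Finset.prod_const, Finset.card_univ, ZMod.card]
    have t4 : (∏ i ∈ (univ : Finset (ZMod d)) \ univ, (if i ∈ J then (-1 : ℚ) else 1)) = 1 := by
      rw [Finset.sdiff_self, Finset.prod_empty]
    rw [t1, t2, t3, t4, if_pos ((NP_cond_char ∅).mpr (Or.inl rfl)),
      if_pos ((NP_cond_char univ).mpr (Or.inr rfl))]
    ring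
  · intro T _ hT
    rw [if_neg, mul_zero]
    intro hc
    rcases (NP_cond_char T).mp hc with rfl | rfl <;> simp at hT
end ALG

end ZipAux

open ZipAux

/-- Explicit strata-expansion of the Hodge–Chern monomials: formula for the coefficient
`a(I,J)` of `N_J` in `L_I = Σ_{|J'|=|I|} a(I,J') N_{J'}`, in terms of the decomposition of
the complement `J^c` into maximal intervals `[st t, st t + len t]`. -/
theorem stmt7 (d p : ℕ) [NeZero d] (hp : p.Prime)
    (I J : Finset (ZMod d))
    (hIne : I.Nonempty) (hIprop : I ≠ Finset.univ)
    (hJne : J.Nonempty) (hJprop : J ≠ Finset.univ)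
    (hcard : I.card = J.card)
    {ι : Type} [Fintype ι] [DecidableEq ι]
    (st : ι → ZMod d) (len : ι → ℕ)
    (hdisj : ∀ s t : ι, s ≠ t →
      Disjoint (intvl d (st s) (len s)) (intvl d (st t) (len t)))
    (hcover : Jᶜ = Finset.univ.biUnion fun t => intvl d (st t) (len t))
    (hmaxl : ∀ t : ι, st t - 1 ∉ (Jᶜ : Finset (ZMod d)))
    (hmaxr : ∀ t : ι, st t + (len t : ZMod d) + 1 ∉ (Jᶜ : Finset (ZMod d)))
    (a : Finset (ZMod d) → ℚ)
    (ha : Lmon d I =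
      ∑ J' ∈ Finset.univ.powerset.filter (fun J' => J'.card = I.card),
        a J' • Nmon d p J') :
    (a J ≠ 0 ↔ ∀ t : ι, ((intvl d (st t) (len t + 1)) \ Iᶜ).card = 1) ∧
    (∀ e : ι → ℕ, (∀ t, e t ≤ len t + 1) →
      (∀ t : ι, (intvl d (st t) (len t + 1)) \ Iᶜ = {st t + (e t : ZMod d)}) →
      a J = (p : ℚ) ^ (∑ t : ι, e t) / ((p : ℚ) ^ d + (-1) ^ I.card)) := by
  classical
  have hd1 : 1 ≤ d := Nat.one_le_iff_ne_zero.mpr (NeZero.ne d)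
  have hIcard : Iᶜ.card = Jᶜ.card := by
    rw [Finset.card_compl, Finset.card_compl, hcard]
  have hppos : (0:ℚ) < (p:ℚ) := by exact_mod_cast hp.pos
  have hpow1 : (1:ℚ) < (p:ℚ)^d := by
    have h1 : (1:ℚ) < (p:ℚ) := by exact_mod_cast hp.one_lt
    exact one_lt_pow₀ h1 (by omega)
  have hD : (p:ℚ)^d + (-1)^I.card ≠ 0 := by
    rcases Nat.even_or_odd I.card with he | ho
    · rw [he.neg_one_pow]; positivity
    · rw [ho.neg_one_pow]; intro h; linarith
  -- quotient identity
  have hJfil : J ∈ Finset.univ.powerset.filter (fun J' => J'.card = I.card) :=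
    Finset.mem_filter.mpr ⟨Finset.mem_powerset.mpr (Finset.subset_univ J), hcard.symm⟩
  have key : Lmon d I * Pmon d p Jᶜ = a J • (Nmon d p J * Pmon d p Jᶜ) := by
    rw [ha, Finset.sum_mul, Finset.sum_eq_single J]
    · rw [smul_mul_assoc]
    · intro J' hJ' hne
      rw [Finset.mem_filter] at hJ'
      have hcard' : J'.card = J.card := hJ'.2.trans hcard
      have hns : ¬ J' ⊆ J := fun hsub =>
        hne (Finset.eq_of_subset_of_card_le hsub (le_of_eq hcard'.symm))
      obtain ⟨i, hiJ', hiJ⟩ := Finset.not_subset.mp hns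
      rw [smul_mul_assoc, Nmon_mul_Pmon_eq_zero d p hiJ' (Finset.mem_compl.mpr hiJ), smul_zero]
    · intro h; exact absurd hJfil h
  have hmkeq : Ideal.Quotient.mk (sqIdeal d)
        ((∏ i ∈ I, X i) * ∏ i ∈ Jᶜ, (C (p:ℚ) * X i + C (1:ℚ) * X (i+1))) =
      Ideal.Quotient.mk (sqIdeal d) (C (a J) *
        ∏ i ∈ (univ : Finset (ZMod d)),
          (C (p:ℚ) * X i + C (if i ∈ J then (-1:ℚ) else 1) * X (i+1))) := by
    rw [← smul_mk, ← NP_eq, ← key, map_mul, ← mk_Lmon, ← mk_Pmon]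
  have hco := coeff_eq_of_mk_eq hmkeq
  rw [coeff_C_mul, NPcoeff, ← hcard] at hco
  have hg := GEN (d := d) I Jᶜ (fun _ => (p:ℚ)) (fun _ => (1:ℚ))
  simp only [Finset.prod_const, one_pow, mul_one] at hg
  rw [hg] at hco
  -- hco : big sum = a J * D
  have haJ : a J = (∑ T ∈ Jᶜ.powerset, (p:ℚ)^T.card *
      (if eS I + eS T + eS ((Jᶜ \ T).image (· + 1)) = eS (univ : Finset (ZMod d))
        then (1:ℚ) else 0)) / ((p:ℚ)^d + (-1)^I.card) := by
    rw [eq_div_iff hD]; exact hco.symm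
  have part2 : ∀ e : ι → ℕ, (∀ t, e t ≤ len t + 1) →
      (∀ t : ι, (intvl d (st t) (len t + 1)) \ Iᶜ = {st t + (e t : ZMod d)}) →
      a J = (p : ℚ) ^ (∑ t : ι, e t) / ((p : ℚ) ^ d + (-1) ^ I.card) := by
    intro e he hsing
    obtain ⟨hdj0, hun0⟩ := T0_union hJne hcover hdisj hmaxr he hsing hIcard
    have hT0sub : T0 st e ⊆ Jᶜ := T0_subset hJne hcover hdisj hmaxr he
    have hSsum : (∑ T ∈ Jᶜ.powerset, (p:ℚ)^T.card *
        (if eS I + eS T + eS ((Jᶜ \ T).image (· + 1)) = eS (univ : Finset (ZMod d))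
          then (1:ℚ) else 0)) = (p:ℚ)^(∑ t : ι, e t) := by
      rw [Finset.sum_eq_single (T0 st e)]
      · rw [if_pos ((cond_iff I (T0 st e) ((Jᶜ \ T0 st e).image (· + 1))).mpr ⟨hdj0, hun0⟩), mul_one,
          T0_card hJne hcover hdisj hmaxr he]
      · intro T hT hne
        by_cases hc : eS I + eS T + eS ((Jᶜ \ T).image (· + 1)) =
            eS (univ : Finset (ZMod d))
        · exfalso
          apply hne
          obtain ⟨hdj', hun'⟩ := (cond_iff I T _).mp hc
          exact core_uniq hJne hcover hdisj hmaxr he hsing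
            (Finset.mem_powerset.mp hT) hdj' hun'
        · rw [if_neg hc, mul_zero]
      · intro h; exact absurd (Finset.mem_powerset.mpr hT0sub) h
    rw [haJ, hSsum]
  refine ⟨?_, part2⟩
  constructor
  · intro h0 t
    have hSne : (∑ T ∈ Jᶜ.powerset, (p:ℚ)^T.card *
        (if eS I + eS T + eS ((Jᶜ \ T).image (· + 1)) = eS (univ : Finset (ZMod d))
          then (1:ℚ) else 0)) ≠ 0 := by
      intro hz
      exact h0 (by rw [haJ, hz, zero_div])
    obtain ⟨T, hT, hTne⟩ := Finset.exists_ne_zero_of_sum_ne_zero hSne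
    have hc : eS I + eS T + eS ((Jᶜ \ T).image (· + 1)) =
        eS (univ : Finset (ZMod d)) := by
      by_contra hc
      rw [if_neg hc, mul_zero] at hTne
      exact hTne rfl
    obtain ⟨hdj', hun'⟩ := (cond_iff I T _).mp hc
    exact core2 hJne hcover hdisj hmaxr (Finset.mem_powerset.mp hT) hdj' hun' t
  · intro hcard1
    choose x hx using fun t => Finset.card_eq_one.mp (hcard1 t)
    have hxW : ∀ t, x t ∈ intvl d (st t) (len t + 1) := by
      intro t
      have : x t ∈ intvl d (st t) (len t + 1) \ Iᶜ := by
        rw [hx t]; exact Finset.mem_singleton_self _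
      exact (Finset.mem_sdiff.mp this).1
    have hex : ∀ t, ∃ j, j ≤ len t + 1 ∧ x t = st t + (j : ZMod d) :=
      fun t => (mem_intvl _ _ _).mp (hxW t)
    choose e he1 he2 using hex
    have hsing : ∀ t : ι, (intvl d (st t) (len t + 1)) \ Iᶜ = {st t + (e t : ZMod d)} := by
      intro t
      rw [hx t, he2 t]
    rw [part2 e he1 hsing]
    exact div_ne_zero (pow_ne_zero _ (ne_of_gt hppos)) hD
end
end

section
/- For every integer m with 0 ≤ m ≤ d, the family (N_J)_{J ⊆ ℤ/d, |J| = m} is linearly independent over ℚ in R, and its ℚ-linear span equals the ℚ-linear span of the family (L_I)_{I ⊆ ℤ/d, |I| = m}; in other words, the matrix A_m expressing the N_J (|J| = m) in the basis (L_I)_{|I| = m} is invertible (its entries are integers whose reduction modulo p is a permutation matrix). -/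
open MvPolynomial Finset

noncomputable section

/-! ### Auxiliary material -/

/-- The squarefree exponent vector with support `I`. -/
def sqf {d : ℕ} (I : Finset (ZMod d)) : (ZMod d) →₀ ℕ := ∑ i ∈ I, Finsupp.single i 1

lemma sqf_apply {d : ℕ} (I : Finset (ZMod d)) (j : ZMod d) :
    sqf I j = if j ∈ I then 1 else 0 := by
  classical
  rw [sqf, Finsupp.finset_sum_apply]
  simp [Finsupp.single_apply]

lemma sqf_le_one {d : ℕ} (I : Finset (ZMod d)) (j : ZMod d) : sqf I j ≤ 1 := by
  rw [sqf_apply]; split <;> omega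

lemma sqf_inj {d : ℕ} {I J : Finset (ZMod d)} (h : sqf I = sqf J) : I = J := by
  classical
  ext j
  have := congrArg (fun f => f j) h
  simp only [sqf_apply] at this
  by_cases hI : j ∈ I <;> by_cases hJ : j ∈ J <;> simp [hI, hJ] at this ⊢

lemma prod_X_eq {R : Type*} [CommSemiring R] {d : ℕ} (I : Finset (ZMod d)) :
    (∏ i ∈ I, (X i : MvPolynomial (ZMod d) R)) = monomial (sqf I) 1 := by
  classical
  induction I using Finset.induction with
  | empty => simp [sqf]
  | insert _ _ h ih =>
      have hs : sqf (insert ‹_› ‹_›) = Finsupp.single ‹_› 1 + sqf ‹_› := by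
        rw [sqf, Finset.sum_insert h]; rfl
      rw [Finset.prod_insert h, ih, hs, monomial_single_add, pow_one]


/-- Coefficient extraction as a ℚ-linear functional on the polynomial ring. -/
def coeffLin {d : ℕ} (s : (ZMod d) →₀ ℕ) : MvPolynomial (ZMod d) ℚ →ₗ[ℚ] ℚ where
  toFun f := coeff s f
  map_add' f g := coeff_add s f g
  map_smul' c f := coeff_smul s c f

lemma coeff_eq_zero_of_mem_sqIdeal {d : ℕ} {f : MvPolynomial (ZMod d) ℚ}
    (hf : f ∈ sqIdeal d) (s : (ZMod d) →₀ ℕ) (hs : ∀ j, s j ≤ 1) :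
    coeff s f = 0 := by
  classical
  revert s
  refine Submodule.span_induction ?_ ?_ ?_ ?_ hf
  · rintro g ⟨i, rfl⟩ s hs
    show coeff s (X i ^ 2) = 0
    rw [X_pow_eq_monomial, coeff_monomial]
    have : Finsupp.single i 2 ≠ s := by
      intro h
      have := hs i
      rw [← h, Finsupp.single_eq_same] at this
      omega
    simp [this]
  · intro s _; simp
  · intro g h _ _ hg hh s hs
    rw [coeff_add, hg s hs, hh s hs, add_zero]
  · intro r g _ hg s hs
    rw [smul_eq_mul, coeff_mul]
    refine Finset.sum_eq_zero fun ab hab => ?_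
    rw [Finset.HasAntidiagonal.mem_antidiagonal] at hab
    have hb : ∀ j, ab.2 j ≤ 1 := by
      intro j
      have : ab.1 j + ab.2 j = s j := by rw [← Finsupp.add_apply, hab]
      have := hs j
      omega
    rw [hg ab.2 hb, mul_zero]

/-- The coefficient functional descended to the quotient ring. -/
def cfun (d : ℕ) (I : Finset (ZMod d)) : ZipRing d →ₗ[ℚ] ℚ :=
  (Submodule.liftQ ((sqIdeal d).restrictScalars ℚ) (coeffLin (sqf I))
    (fun f hf => coeff_eq_zero_of_mem_sqIdeal hf (sqf I) (sqf_le_one I))) ∘ₗ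
  (Submodule.Quotient.restrictScalarsEquiv ℚ
    ((sqIdeal d : Submodule (MvPolynomial (ZMod d) ℚ) (MvPolynomial (ZMod d) ℚ)))).symm.toLinearMap

lemma cfun_mk {d : ℕ} (I : Finset (ZMod d)) (f : MvPolynomial (ZMod d) ℚ) :
    cfun d I (Ideal.Quotient.mk (sqIdeal d) f) = coeff (sqf I) f := by
  rw [cfun, ← Ideal.Quotient.mk_eq_mk]
  simp only [LinearMap.comp_apply, LinearEquiv.coe_coe,
    Submodule.Quotient.restrictScalarsEquiv_symm_mk, Submodule.liftQ_apply]
  rfl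

lemma cfun_L {d : ℕ} (I J : Finset (ZMod d)) :
    cfun d I (Lmon d J) = if I = J then 1 else 0 := by
  classical
  have : Lmon d J = Ideal.Quotient.mk (sqIdeal d) (monomial (sqf J) 1) := by
    rw [Lmon, ← prod_X_eq, map_prod]; rfl
  rw [this, cfun_mk, coeff_monomial]
  by_cases h : I = J
  · simp [h]
  · have : sqf J ≠ sqf I := fun hs => h (sqf_inj hs).symm
    simp [h, this]

lemma lsq {d : ℕ} (i : ZMod d) : lcl d i * lcl d i = 0 := by
  rw [lcl, ← map_mul, ← sq, Ideal.Quotient.eq_zero_iff_mem]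
  exact Ideal.subset_span ⟨i, rfl⟩

lemma prod_lcl_mem {d : ℕ} (m : ℕ) (J : Finset (ZMod d)) (f : ZMod d → ZMod d)
    (hJ : J.card = m) :
    (∏ i ∈ J, lcl d (f i)) ∈ Submodule.span ℚ
      (Set.range fun I : {I : Finset (ZMod d) // I.card = m} => Lmon d I.1) := by
  classical
  by_cases hinj : Set.InjOn f J
  · have himg : (J.image f).card = m := by
      rw [Finset.card_image_of_injOn hinj, hJ]
    have hLm : ∏ i ∈ J, lcl d (f i) = Lmon d (J.image f) := by
      rw [Lmon, Finset.prod_image fun a ha b hb h => hinj ha hb h]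
    rw [hLm]
    exact Submodule.subset_span ⟨⟨J.image f, himg⟩, rfl⟩
  · rw [Set.InjOn] at hinj
    push_neg at hinj
    obtain ⟨a, ha, b, hb, hfab, hab⟩ := hinj
    have ha' : a ∈ J := ha
    have hb' : b ∈ J.erase a := Finset.mem_erase.mpr ⟨fun h => hab h.symm, hb⟩
    have h0 : (∏ i ∈ J, lcl d (f i)) = 0 := by
      rw [← Finset.mul_prod_erase _ _ ha', ← Finset.mul_prod_erase _ _ hb',
        ← mul_assoc, hfab, lsq, zero_mul]
    rw [h0]
    exact Submodule.zero_mem _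

lemma Nmon_mem {d : ℕ} (p m : ℕ) (J : Finset (ZMod d)) (hJ : J.card = m) :
    Nmon d p J ∈ Submodule.span ℚ
      (Set.range fun I : {I : Finset (ZMod d) // I.card = m} => Lmon d I.1) := by
  classical
  have hexp : Nmon d p J =
      ∑ t ∈ J.powerset, (∏ i ∈ t, ((p : ZipRing d) * lcl d i)) *
        ∏ i ∈ J \ t, (-(lcl d (i + 1))) := by
    rw [Nmon, ← Finset.prod_add]
    exact Finset.prod_congr rfl fun i _ => by rw [Nelt, sub_eq_add_neg]
  rw [hexp]
  refine Submodule.sum_mem _ fun t ht => ?_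
  rw [Finset.mem_powerset] at ht
  have hA : (∏ i ∈ t, ((p : ZipRing d) * lcl d i))
      = (p : ZipRing d) ^ t.card * ∏ i ∈ t, lcl d i := by
    rw [Finset.prod_mul_distrib, Finset.prod_const]
  have hB : (∏ i ∈ J \ t, (-(lcl d (i + 1))))
      = (-1 : ZipRing d) ^ (J \ t).card * ∏ i ∈ J \ t, lcl d (i + 1) := by
    rw [← Finset.prod_const, ← Finset.prod_mul_distrib]
    exact Finset.prod_congr rfl fun i _ => by ring
  set g : ZMod d → ZMod d := fun i => if i ∈ t then i else i + 1 with hg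
  have hD : (∏ i ∈ t, lcl d i) * ∏ i ∈ J \ t, lcl d (i + 1)
      = ∏ i ∈ J, lcl d (g i) := by
    rw [← Finset.prod_sdiff ht, mul_comm]
    congr 1
    · exact Finset.prod_congr rfl fun i hi => by
        simp [hg, (Finset.mem_sdiff.mp hi).2]
    · exact Finset.prod_congr rfl fun i hi => by simp [hg, hi]
  have hscal : (p : ZipRing d) ^ t.card * (-1 : ZipRing d) ^ (J \ t).card
      = algebraMap ℚ (ZipRing d) ((p : ℚ) ^ t.card * (-1 : ℚ) ^ (J \ t).card) := by
    rw [map_mul, map_pow, map_pow, map_natCast, map_neg, map_one]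
  rw [hA, hB, mul_mul_mul_comm, hD, hscal, ← Algebra.smul_def]
  exact Submodule.smul_mem _ _ (prod_lcl_mem m J g hJ)

lemma L_indep (d m : ℕ) :
    LinearIndependent ℚ
      (fun I : {I : Finset (ZMod d) // I.card = m} => Lmon d I.1) := by
  classical
  rw [linearIndependent_iff']
  intro s gcoef hsum I hI
  have h := congrArg (cfun d I.1) hsum
  rw [map_sum, map_zero] at h
  simp only [map_smul, cfun_L, smul_eq_mul] at h
  rw [Finset.sum_eq_single I (fun J _ hJI => by
      rw [if_neg fun h => hJI (Subtype.ext h.symm), mul_zero])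
    (fun h => absurd hI h)] at h
  rw [if_pos rfl, mul_one] at h
  exact h

/-- Integer lift of the polynomial `∏_{i∈J} (p X_i - X_{i+1})`. -/
def qint (d p : ℕ) (J : Finset (ZMod d)) : MvPolynomial (ZMod d) ℤ :=
  ∏ i ∈ J, ((p : MvPolynomial (ZMod d) ℤ) * X i - X (i + 1))

lemma Nmon_eq_mk {d : ℕ} (p : ℕ) (J : Finset (ZMod d)) :
    Nmon d p J = Ideal.Quotient.mk (sqIdeal d)
      (MvPolynomial.map (Int.castRingHom ℚ) (qint d p J)) := by
  rw [qint, map_prod, map_prod, Nmon]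
  refine Finset.prod_congr rfl fun i _ => ?_
  simp only [map_sub, map_mul, map_natCast, MvPolynomial.map_X]
  rw [Nelt, lcl, lcl]

lemma cfun_Nmon {d : ℕ} (p : ℕ) (I J : Finset (ZMod d)) :
    cfun d I (Nmon d p J) = ((coeff (sqf I) (qint d p J) : ℤ) : ℚ) := by
  rw [Nmon_eq_mk, cfun_mk, coeff_map]
  rfl

/-- The shift `I ↦ I + 1` as an equivalence on `m`-subsets. -/
def shiftEquiv (d m : ℕ) :
    {I : Finset (ZMod d) // I.card = m} ≃ {I : Finset (ZMod d) // I.card = m} where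
  toFun I := ⟨I.1.map (Equiv.addRight (1 : ZMod d)).toEmbedding,
    by rw [Finset.card_map, I.2]⟩
  invFun I := ⟨I.1.map (Equiv.addRight (1 : ZMod d)).symm.toEmbedding,
    by rw [Finset.card_map, I.2]⟩
  left_inv I := by
    ext1
    show Finset.map _ (Finset.map _ _) = _
    rw [Finset.map_map]
    ext a
    simp
  right_inv I := by
    ext1
    show Finset.map _ (Finset.map _ _) = _
    rw [Finset.map_map]
    ext a
    simp

lemma qint_modp {d : ℕ} (p : ℕ) (J : Finset (ZMod d)) :
    MvPolynomial.map (Int.castRingHom (ZMod p)) (qint d p J)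
      = C ((-1 : ZMod p) ^ J.card) *
        monomial (sqf (J.map (Equiv.addRight (1 : ZMod d)).toEmbedding)) 1 := by
  classical
  rw [qint, map_prod]
  have hfac : ∀ i ∈ J, MvPolynomial.map (Int.castRingHom (ZMod p))
      ((p : MvPolynomial (ZMod d) ℤ) * X i - X (i + 1)) = -(X (i + 1)) := by
    intro i _
    simp only [map_sub, map_mul, map_natCast, MvPolynomial.map_X]
    have hp0 : (p : MvPolynomial (ZMod d) (ZMod p)) = 0 := by
      rw [← map_natCast (C : ZMod p →+* MvPolynomial (ZMod d) (ZMod p)),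
        ZMod.natCast_self, map_zero]
    rw [hp0, zero_mul, zero_sub]
  rw [Finset.prod_congr rfl hfac]
  have : ∀ i ∈ J, -(X (i + 1) : MvPolynomial (ZMod d) (ZMod p))
      = (-1) * X (i + 1) := fun i _ => by ring
  rw [Finset.prod_congr rfl this, Finset.prod_mul_distrib, Finset.prod_const,
    ← prod_X_eq, Finset.prod_map]
  simp only [Equiv.coe_toEmbedding, Equiv.coe_addRight]
  rw [C_pow, map_neg, map_one]

lemma det_Aint_ne_zero (d p m : ℕ) [NeZero d] (hp : p.Prime) :
    (Matrix.of fun I J : {I : Finset (ZMod d) // I.card = m} =>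
      coeff (sqf I.1) (qint d p J.1)).det ≠ 0 := by
  classical
  haveI : Fact p.Prime := ⟨hp⟩
  set A : Matrix {I : Finset (ZMod d) // I.card = m}
      {I : Finset (ZMod d) // I.card = m} ℤ :=
    Matrix.of fun I J => coeff (sqf I.1) (qint d p J.1) with hAdef
  intro h
  have hmap : A.map (Int.castRingHom (ZMod p)) =
      ((-1 : ZMod p) ^ m) •
        (Equiv.Perm.permMatrix (ZMod p) ((shiftEquiv d m).symm : Equiv.Perm _)) := by
    ext I J
    have hiff : (sqf (J.1.map (Equiv.addRight (1 : ZMod d)).toEmbedding) = sqf I.1)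
        ↔ ((shiftEquiv d m).symm I = J) := by
      constructor
      · intro hs
        have h2 : (shiftEquiv d m) J = I := Subtype.ext (sqf_inj hs)
        rw [← h2, Equiv.symm_apply_apply]
      · intro hs
        have h2 : (shiftEquiv d m) J = I := by rw [← hs, Equiv.apply_symm_apply]
        have h3 : J.1.map (Equiv.addRight (1 : ZMod d)).toEmbedding = I.1 :=
          congrArg Subtype.val h2
        rw [h3]
    have hperm : (((-1 : ZMod p) ^ m) •
        (Equiv.Perm.permMatrix (ZMod p) ((shiftEquiv d m).symm : Equiv.Perm _))) I J
        = (-1 : ZMod p) ^ m * (if (shiftEquiv d m).symm I = J then 1 else 0) := by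
      simp [Equiv.Perm.permMatrix, PEquiv.toMatrix_apply, Equiv.toPEquiv_apply]
    rw [Matrix.map_apply, hAdef, Matrix.of_apply, ← coeff_map, qint_modp, J.2,
      C_mul_monomial, mul_one, coeff_monomial, hperm]
    by_cases hc : (shiftEquiv d m).symm I = J
    · rw [if_pos (hiff.mpr hc), if_pos hc, mul_one]
    · rw [if_neg (fun hs => hc (hiff.mp hs)), if_neg hc, mul_zero]
  have h0 : (A.map (Int.castRingHom (ZMod p))).det = 0 := by
    have := (RingHom.map_det (Int.castRingHom (ZMod p)) A).symm
    rw [RingHom.mapMatrix_apply] at this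
    rw [this, h, map_zero]
  rw [hmap, Matrix.det_smul, Matrix.det_permutation] at h0
  have hu : IsUnit ((((-1 : ZMod p) ^ m) ^
      Fintype.card {I : Finset (ZMod d) // I.card = m}) *
        ((Equiv.Perm.sign ((shiftEquiv d m).symm : Equiv.Perm _) : ℤ) : ZMod p)) := by
    apply IsUnit.mul
    · exact (((isUnit_one.neg).pow m).pow _)
    · rcases Int.units_eq_one_or (Equiv.Perm.sign
          ((shiftEquiv d m).symm : Equiv.Perm _)) with hs | hs <;>
        rw [hs] <;> simp
  rw [h0] at hu
  exact hu.ne_zero rfl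

/-- For each `0 ≤ m ≤ d`, the strata classes `N_J` with `|J| = m` are linearly independent
over ℚ and span the same ℚ-subspace of `R` as the Hodge–Chern monomials `L_I` with
`|I| = m`. -/
theorem stmt9 (d p : ℕ) [NeZero d] (hp : p.Prime) (m : ℕ) (hm : m ≤ d) :
    LinearIndependent ℚ
      (fun J : {J : Finset (ZMod d) // J.card = m} => Nmon d p J.1) ∧
    Submodule.span ℚ
        (Set.range fun J : {J : Finset (ZMod d) // J.card = m} => Nmon d p J.1) =
      Submodule.span ℚ
        (Set.range fun I : {I : Finset (ZMod d) // I.card = m} => Lmon d I.1) := by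
  classical
  set L : {I : Finset (ZMod d) // I.card = m} → ZipRing d := fun I => Lmon d I.1 with hLdef
  have hL : LinearIndependent ℚ L := L_indep d m
  set V := Submodule.span ℚ (Set.range L) with hVdef
  let b : Module.Basis {I : Finset (ZMod d) // I.card = m} ℚ V := Module.Basis.span hL
  have hNV : ∀ J : {J : Finset (ZMod d) // J.card = m}, Nmon d p J.1 ∈ V :=
    fun J => Nmon_mem p m J.1 J.2
  set n : {J : Finset (ZMod d) // J.card = m} → V := fun J => ⟨Nmon d p J.1, hNV J⟩
    with hndef
  have hrepr : ∀ (x : V) (I : {I : Finset (ZMod d) // I.card = m}),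
      b.repr x I = cfun d I.1 (x : ZipRing d) := by
    intro x I
    conv_rhs => rw [← b.sum_repr x]
    rw [AddSubmonoidClass.coe_finset_sum, map_sum]
    have hterm : ∀ J : {I : Finset (ZMod d) // I.card = m},
        cfun d I.1 ((b.repr x J • b J : V) : ZipRing d)
          = b.repr x J * (if I = J then 1 else 0) := by
      intro J
      rw [SetLike.val_smul, map_smul, smul_eq_mul]
      congr 1
      have : ((b J : V) : ZipRing d) = L J := congrArg Subtype.val (Module.Basis.span_apply hL J)
      rw [this, hLdef, cfun_L]
      by_cases h : I = J
      · simp [h]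
      · rw [if_neg (fun hh : I.1 = J.1 => h (Subtype.ext hh)), if_neg h]
    rw [Finset.sum_congr rfl fun J _ => hterm J,
      Finset.sum_eq_single I (fun J _ hJI => by rw [if_neg fun h => hJI h.symm, mul_zero])
        (fun h => absurd (Finset.mem_univ I) h),
      if_pos rfl, mul_one]
  have hmat : b.toMatrix n = Matrix.of
      (fun I J : {I : Finset (ZMod d) // I.card = m} =>
        ((coeff (sqf I.1) (qint d p J.1) : ℤ) : ℚ)) := by
    ext I J
    rw [Module.Basis.toMatrix_apply, hrepr, Matrix.of_apply, hndef]
    exact cfun_Nmon p I.1 J.1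
  have hdet : IsUnit (b.det n) := by
    rw [Module.Basis.det_apply, hmat]
    rw [isUnit_iff_ne_zero]
    intro h0
    apply det_Aint_ne_zero d p m hp
    have : ((Int.castRingHom ℚ).mapMatrix
        (Matrix.of fun I J : {I : Finset (ZMod d) // I.card = m} =>
          coeff (sqf I.1) (qint d p J.1))).det = 0 := by
      rw [← h0]
      congr 1
    rw [← RingHom.map_det] at this
    have h4 : (((Matrix.of fun I J : {I : Finset (ZMod d) // I.card = m} =>
        coeff (sqf I.1) (qint d p J.1)).det : ℤ) : ℚ) = 0 := this
    exact_mod_cast h4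
  obtain ⟨hind, hspan⟩ := (Module.Basis.is_basis_iff_det b).mpr hdet
  constructor
  · have h1 := hind.map' V.subtype (Submodule.ker_subtype V)
    exact h1
  · have h2 : Submodule.map V.subtype (Submodule.span ℚ (Set.range n))
        = Submodule.map V.subtype ⊤ := by rw [hspan]
    rw [Submodule.map_span, Submodule.map_top, Submodule.range_subtype,
      ← Set.range_comp] at h2
    have h3 : (V.subtype ∘ n) = fun J : {J : Finset (ZMod d) // J.card = m} =>
        Nmon d p J.1 := rfl
    rw [h3] at h2
    rw [h2, hVdef, hLdef]
end
end
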